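/- arXiv:2411.11655 — 4 statements merged into one kernel-verified Lean document; each statement's English description precedes it below -/
import Mathlib

section
/- Let μ ∈ (0,1). Then ∫_0^{π/2} (4/sin²ψ) · [ (1/(2μ² sin ψ)) · log( (1 + μ sin ψ)/(1 − μ sin ψ) ) − 1/μ ] dψ = π ( arcsin(μ)/μ² − √(1−μ²)/μ ). -/
open Real intervalIntegral

open MeasureTheory Set


lemma psi_integral (m : ℝ) (hm0 : 0 ≤ m) (hm1 : m < 1) :
    ∫ ψ in (0:ℝ)..(π/2), 1 / (1 - m^2 * Real.sin ψ ^ 2)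
      = π / (2 * Real.sqrt (1 - m^2)) := by
  set c := Real.sqrt (1 - m^2) with hc
  have h1m : (0:ℝ) < 1 - m^2 := by nlinarith
  have hcpos : 0 < c := Real.sqrt_pos.mpr h1m
  have hc2 : c^2 = 1 - m^2 := Real.sq_sqrt h1m.le
  have hc1 : c ≤ 1 := by
    rw [hc]; nlinarith [Real.sq_sqrt h1m.le, Real.sqrt_nonneg (1 - m^2)]
  set G : ℝ → ℝ := fun ψ =>
    (ψ + Real.arctan ((c - 1) * Real.sin ψ * Real.cos ψ /
      (Real.cos ψ ^ 2 + c * Real.sin ψ ^ 2))) / c with hG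
  have hD : ∀ ψ : ℝ, 0 < Real.cos ψ ^ 2 + c * Real.sin ψ ^ 2 := by
    intro ψ
    nlinarith [sin_sq_add_cos_sq ψ, sq_nonneg (Real.sin ψ), sq_nonneg (Real.cos ψ)]
  have hden : ∀ ψ : ℝ, 0 < 1 - m^2 * Real.sin ψ ^ 2 := by
    intro ψ
    nlinarith [sin_sq_add_cos_sq ψ, sq_nonneg (Real.sin ψ), sq_nonneg (Real.cos ψ), sq_nonneg m]
  have hderiv : ∀ ψ : ℝ, HasDerivAt G (1 / (1 - m^2 * Real.sin ψ ^ 2)) ψ := by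
    intro ψ
    have hs := Real.hasDerivAt_sin ψ
    have hco := Real.hasDerivAt_cos ψ
    have hN : HasDerivAt (fun ψ => (c - 1) * Real.sin ψ * Real.cos ψ)
        ((c - 1) * (Real.cos ψ ^ 2 - Real.sin ψ ^ 2)) ψ := by
      have := ((hs.const_mul (c-1)).mul hco)
      exact this.congr_deriv (by ring)
    have hDd : HasDerivAt (fun ψ => Real.cos ψ ^ 2 + c * Real.sin ψ ^ 2)
        (2 * (c - 1) * Real.sin ψ * Real.cos ψ) ψ := by
      have := ((hco.pow 2).add ((hs.pow 2).const_mul c))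
      exact this.congr_deriv (by ring)
    have hu : HasDerivAt (fun ψ => (c - 1) * Real.sin ψ * Real.cos ψ /
        (Real.cos ψ ^ 2 + c * Real.sin ψ ^ 2))
        (((c - 1) * (Real.cos ψ ^ 2 - Real.sin ψ ^ 2) * (Real.cos ψ ^ 2 + c * Real.sin ψ ^ 2)
          - (c - 1) * Real.sin ψ * Real.cos ψ * (2 * (c - 1) * Real.sin ψ * Real.cos ψ))
          / (Real.cos ψ ^ 2 + c * Real.sin ψ ^ 2)^2) ψ :=
      hN.div hDd (hD ψ).ne'
    have harc := hu.arctan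
    have hfin := ((hasDerivAt_id ψ).add harc).div_const c
    refine hfin.congr_deriv (Eq.symm ?_)
    set S := Real.sin ψ
    set C := Real.cos ψ
    have hSC : S^2 + C^2 = 1 := sin_sq_add_cos_sq ψ
    have hD' : (0:ℝ) < C^2 + c*S^2 := hD ψ
    have hden' : (0:ℝ) < 1 - m^2 * S^2 := hden ψ
    have h1u : 0 < 1 + ((c-1)*S*C/(C^2+c*S^2))^2 := by positivity
    rw [div_eq_div_iff hden'.ne' hcpos.ne']
    have hE : 1 + ((c-1)*S*C/(C^2+c*S^2))^2 = (1 - m^2*S^2)/(C^2+c*S^2)^2 := by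
      rw [eq_div_iff (by positivity), add_mul, div_pow, div_mul_cancel₀ _ (by positivity)]
      linear_combination (C^2 + c^2*S^2 + 1)*hSC + S^2*hc2
    rw [hE]
    have key : 1 / ((1 - m^2*S^2)/(C^2+c*S^2)^2) * (((c - 1) * (C ^ 2 - S ^ 2) * (C ^ 2 + c * S ^ 2) - (c - 1) * S * C * (2 * (c - 1) * S * C))/(C^2+c*S^2)^2) * (1 - m^2*S^2) = ((c - 1) * (C ^ 2 - S ^ 2) * (C ^ 2 + c * S ^ 2) - (c - 1) * S * C * (2 * (c - 1) * S * C)) := by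
      rw [div_mul_div_comm, div_mul_cancel₀ (1 - m^2*S^2) (pow_ne_zero 2 hD'.ne'), div_mul_cancel₀ _ hden'.ne', one_mul]
    linear_combination (-1)*key + (-(c-1)*(C^2 + 1 - S^2) + (c-1)^2*S^2)*hSC + S^2*hc2
  have hcont : Continuous fun ψ => 1 / (1 - m^2 * Real.sin ψ ^ 2) := by
    apply Continuous.div continuous_const
    · fun_prop
    · intro ψ; exact (hden ψ).ne'
  have := intervalIntegral.integral_eq_sub_of_hasDerivAt
    (fun ψ _ => hderiv ψ) (hcont.intervalIntegrable 0 (π/2))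
  rw [this]
  have : G (π/2) = (π/2) / c := by
    simp [hG, Real.sin_pi_div_two, Real.cos_pi_div_two]
  rw [this]
  have : G 0 = 0 := by
    simp [hG]
  rw [this]
  rw [hc]; ring


lemma m_integral (μ s : ℝ) (hμ0 : 0 < μ) (hμ1 : μ < 1) (hs0 : 0 < s) (hs1 : s ≤ 1) :
    ∫ m in (0:ℝ)..μ, m^2 / (1 - m^2 * s^2)
      = (1 / (2 * s^3)) * Real.log ((1 + μ*s) / (1 - μ*s)) - μ / s^2 := by
  have huIcc : uIcc (0:ℝ) μ = Icc 0 μ := uIcc_of_le hμ0.le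
  have hms : ∀ m ∈ Icc (0:ℝ) μ, m * s < 1 := by
    intro m hm
    calc m * s ≤ μ * 1 := by
          apply mul_le_mul hm.2 hs1 hs0.le hμ0.le
      _ < 1 := by linarith
  have hderiv : ∀ m ∈ uIcc (0:ℝ) μ,
      HasDerivAt (fun m => (1 / (2 * s^3)) * Real.log ((1 + m*s) / (1 - m*s)) - m / s^2)
        (m^2 / (1 - m^2 * s^2)) m := by
    intro m hm
    rw [huIcc] at hm
    have hms' := hms m hm
    have hms0 : 0 ≤ m * s := mul_nonneg hm.1 hs0.le
    have hp : (0:ℝ) < 1 + m*s := by linarith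
    have hq : (0:ℝ) < 1 - m*s := by linarith
    have hnum : HasDerivAt (fun m : ℝ => 1 + m*s) s m := by
      simpa using ((hasDerivAt_id m).mul_const s).const_add 1
    have hden : HasDerivAt (fun m : ℝ => 1 - m*s) (-s) m := by
      simpa using ((hasDerivAt_id m).mul_const s).const_sub 1
    have hquot := hnum.div hden hq.ne'
    have hlog := (hquot.log (div_pos hp hq).ne')
    have hfin := (hlog.const_mul (1 / (2 * s^3))).sub ((hasDerivAt_id m).div_const (s^2))
    refine hfin.congr_deriv (Eq.symm ?_)
    have h1 : (0:ℝ) < 1 - m^2*s^2 := by nlinarith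
    simp only [Pi.div_apply]
    field_simp
    ring
  have hint : IntervalIntegrable (fun m => m^2 / (1 - m^2 * s^2)) volume 0 μ := by
    apply ContinuousOn.intervalIntegrable
    apply ContinuousOn.div (by fun_prop) (by fun_prop)
    intro m hm
    rw [huIcc] at hm
    have := hms m hm
    have hms0 : 0 ≤ m * s := mul_nonneg hm.1 hs0.le
    nlinarith
  rw [intervalIntegral.integral_eq_sub_of_hasDerivAt hderiv hint]
  simp

lemma outer_integral (μ : ℝ) (hμ0 : 0 < μ) (hμ1 : μ < 1) :
    ∫ m in (0:ℝ)..μ, π * m^2 / (2 * Real.sqrt (1 - m^2))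
      = (π/4) * (Real.arcsin μ - μ * Real.sqrt (1 - μ^2)) := by
  have huIcc : uIcc (0:ℝ) μ = Icc 0 μ := uIcc_of_le hμ0.le
  have hderiv : ∀ m ∈ uIcc (0:ℝ) μ,
      HasDerivAt (fun m => (π/4) * (Real.arcsin m - m * Real.sqrt (1 - m^2)))
        (π * m^2 / (2 * Real.sqrt (1 - m^2))) m := by
    intro m hm
    rw [huIcc] at hm
    have hm1 : m < 1 := lt_of_le_of_lt hm.2 hμ1
    have h1m : (0:ℝ) < 1 - m^2 := by nlinarith [hm.1]
    have hsq : Real.sqrt (1 - m^2) > 0 := Real.sqrt_pos.mpr h1m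
    have hsq2 : Real.sqrt (1 - m^2) ^ 2 = 1 - m^2 := Real.sq_sqrt h1m.le
    have ha := Real.hasDerivAt_arcsin (by linarith [hm.1] : m ≠ -1) hm1.ne
    have hin : HasDerivAt (fun m : ℝ => 1 - m^2) (-(2*m)) m := by
      simpa using ((hasDerivAt_pow 2 m).const_sub 1)
    have hs := hin.sqrt h1m.ne'
    have hms := (hasDerivAt_id m).mul hs
    have hfin := (ha.sub hms).const_mul (π/4)
    refine hfin.congr_deriv (Eq.symm ?_)
    simp only [id]
    field_simp
    linear_combination 2 * hsq2
  have hint : IntervalIntegrable (fun m => π * m^2 / (2 * Real.sqrt (1 - m^2))) volume 0 μ := by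
    apply ContinuousOn.intervalIntegrable
    apply ContinuousOn.div (by fun_prop) (by fun_prop)
    intro m hm
    rw [huIcc] at hm
    have hm1 : m < 1 := lt_of_le_of_lt hm.2 hμ1
    have h1m : (0:ℝ) < 1 - m^2 := by nlinarith [hm.1]
    positivity
  rw [intervalIntegral.integral_eq_sub_of_hasDerivAt hderiv hint]
  simp

/-- Angular integral identity producing the closed-form coefficient of the logarithmic
correction to the Bose polaron ground-state energy: for `μ ∈ (0,1)`,
`∫₀^{π/2} (4/sin²ψ)[(1/(2μ² sin ψ)) log((1+μ sin ψ)/(1−μ sin ψ)) − 1/μ] dψ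
  = π (arcsin(μ)/μ² − √(1−μ²)/μ)`. -/
theorem angular_integral_closed_form (μ : ℝ) (hμ : μ ∈ Set.Ioo (0 : ℝ) 1) :
    ∫ ψ in (0:ℝ)..(π / 2),
      (4 / Real.sin ψ ^ 2) *
        ((1 / (2 * μ ^ 2 * Real.sin ψ)) *
            Real.log ((1 + μ * Real.sin ψ) / (1 - μ * Real.sin ψ)) - 1 / μ) =
      π * (Real.arcsin μ / μ ^ 2 - Real.sqrt (1 - μ ^ 2) / μ) := by
  obtain ⟨hμ0, hμ1⟩ := hμ
  have hπ2 : (0:ℝ) ≤ π / 2 := by positivity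
  have hμne : μ ≠ 0 := hμ0.ne'
  -- integrability on the product for Fubini
  have hFcont : ContinuousOn
      (Function.uncurry fun (ψ m : ℝ) => m ^ 2 / (1 - m ^ 2 * Real.sin ψ ^ 2))
      (Icc 0 (π/2) ×ˢ Icc 0 μ) := by
    apply ContinuousOn.div (by fun_prop) (by fun_prop)
    rintro ⟨ψ, m⟩ ⟨h1, h2⟩
    have hsin : Real.sin ψ ^ 2 ≤ 1 := by
      nlinarith [neg_one_le_sin ψ, sin_le_one ψ]
    have hm2 : m ^ 2 ≤ μ ^ 2 := by nlinarith [h2.1, h2.2]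
    have : m ^ 2 * Real.sin ψ ^ 2 ≤ μ ^ 2 := by nlinarith [sq_nonneg m]
    simp only []
    nlinarith
  have hint : Integrable
      (Function.uncurry fun (ψ m : ℝ) => m ^ 2 / (1 - m ^ 2 * Real.sin ψ ^ 2))
      ((volume.restrict (Ioc 0 (π/2))).prod (volume.restrict (Ioc 0 μ))) := by
    rw [Measure.prod_restrict, ← Measure.volume_eq_prod]
    exact (hFcont.integrableOn_compact (isCompact_Icc.prod isCompact_Icc)).mono_set
      (prod_mono Ioc_subset_Icc_self Ioc_subset_Icc_self)
  rw [intervalIntegral.integral_of_le hπ2]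
  have step1 : ∀ ψ ∈ Ioc (0:ℝ) (π/2),
      (4 / Real.sin ψ ^ 2) *
        ((1 / (2 * μ ^ 2 * Real.sin ψ)) *
            Real.log ((1 + μ * Real.sin ψ) / (1 - μ * Real.sin ψ)) - 1 / μ)
      = (4 / μ ^ 2) * ∫ m in Ioc (0:ℝ) μ, m ^ 2 / (1 - m ^ 2 * Real.sin ψ ^ 2) := by
    intro ψ hψ
    have hs0 : 0 < Real.sin ψ :=
      Real.sin_pos_of_pos_of_lt_pi hψ.1 (lt_of_le_of_lt hψ.2 (by linarith [pi_pos]))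
    have hs1 : Real.sin ψ ≤ 1 := Real.sin_le_one ψ
    rw [← intervalIntegral.integral_of_le hμ0.le,
      m_integral μ (Real.sin ψ) hμ0 hμ1 hs0 hs1]
    field_simp
  rw [MeasureTheory.setIntegral_congr_fun measurableSet_Ioc step1,
    MeasureTheory.integral_const_mul,
    MeasureTheory.integral_integral_swap hint]
  have step2 : ∀ m ∈ Ioc (0:ℝ) μ,
      (∫ ψ in Ioc (0:ℝ) (π/2), m ^ 2 / (1 - m ^ 2 * Real.sin ψ ^ 2))
        = π * m ^ 2 / (2 * Real.sqrt (1 - m ^ 2)) := by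
    intro m hm
    rw [← intervalIntegral.integral_of_le hπ2]
    have : ∀ ψ : ℝ, m ^ 2 / (1 - m ^ 2 * Real.sin ψ ^ 2)
        = m ^ 2 * (1 / (1 - m ^ 2 * Real.sin ψ ^ 2)) := fun ψ => by ring
    simp_rw [this]
    rw [intervalIntegral.integral_const_mul,
      psi_integral m hm.1.le (lt_of_le_of_lt hm.2 hμ1)]
    ring
  rw [MeasureTheory.setIntegral_congr_fun measurableSet_Ioc step2,
    ← intervalIntegral.integral_of_le hμ0.le, outer_integral μ hμ0 hμ1]
  field_simp
end

section
/- For every real μ with 0 < μ < 1, arcsin(μ)/μ − √(1−μ²) = Σ_{n=1}^∞ (4n / ((4n²−1)·4ⁿ)) · binomial(2n, n) · μ^{2n}, where binomial(2n,n) is the central binomial coefficient. -/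
open Real
open Set


/-- normalized central binomial coefficient -/
noncomputable def cc (n : ℕ) : ℝ := (Nat.centralBinom n : ℝ) / 4 ^ n

lemma centralBinom_le_four_pow' (n : ℕ) : Nat.centralBinom n ≤ 4 ^ n := by
  induction n with
  | zero => simp [Nat.centralBinom]
  | succ n ih =>
      have h := Nat.succ_mul_centralBinom_succ n
      have h2 : (n + 1) * Nat.centralBinom (n + 1) ≤ (n + 1) * 4 ^ (n + 1) := by
        rw [h, pow_succ]
        calc 2 * (2 * n + 1) * Nat.centralBinom n ≤ ((n + 1) * 4) * 4 ^ n :=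
              Nat.mul_le_mul (by omega) ih
          _ = (n + 1) * (4 ^ n * 4) := by ring
      exact Nat.le_of_mul_le_mul_left h2 (Nat.succ_pos n)

lemma cc_nonneg (n : ℕ) : 0 ≤ cc n := by unfold cc; positivity

lemma cc_le_one (n : ℕ) : cc n ≤ 1 := by
  rw [cc, div_le_one (by positivity)]
  exact_mod_cast centralBinom_le_four_pow' n

lemma cB_rec (n : ℕ) : ((n : ℝ) + 1) * (Nat.centralBinom (n + 1) : ℝ)
    = 2 * (2 * n + 1) * Nat.centralBinom n := by
  exact_mod_cast Nat.succ_mul_centralBinom_succ n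

lemma cc_rec (n : ℕ) : 2 * ((n : ℝ) + 1) * cc (n + 1) = (2 * n + 1) * cc n := by
  have h := cB_rec n
  have h4 : (4 : ℝ) ^ n ≠ 0 := by positivity
  rw [cc, cc, pow_succ]
  field_simp
  linear_combination 2 * h

/-- summability of the basic series -/
lemma cc_summable {x : ℝ} (hx : |x| < 1) : Summable fun n : ℕ => cc n * x ^ n := by
  apply Summable.of_norm_bounded (summable_geometric_of_lt_one (abs_nonneg x) hx)
  intro n
  rw [norm_mul, Real.norm_eq_abs, Real.norm_eq_abs, abs_pow,
    abs_of_nonneg (cc_nonneg n)]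
  exact mul_le_of_le_one_left (by positivity) (cc_le_one n)

lemma cc_shift_summable {x : ℝ} (hx : |x| < 1) :
    Summable fun n : ℕ => ((n : ℝ) + 1) * cc (n + 1) * x ^ n := by
  have hg : Summable fun n : ℕ => ((n : ℝ) + 1) * |x| ^ n := by
    have h1 := summable_pow_mul_geometric_of_norm_lt_one 1
      (r := |x|) (by rwa [Real.norm_eq_abs, abs_abs])
    exact (h1.add (summable_geometric_of_lt_one (abs_nonneg x) hx)).congr
      fun n => by ring
  apply Summable.of_norm_bounded hg
  intro n
  rw [norm_mul, norm_mul, Real.norm_eq_abs, Real.norm_eq_abs, Real.norm_eq_abs, abs_pow]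
  have h1 : |((n : ℝ) + 1)| = (n : ℝ) + 1 := abs_of_nonneg (by positivity)
  rw [h1, abs_of_nonneg (cc_nonneg _), mul_assoc]
  apply mul_le_mul_of_nonneg_left _ (by positivity)
  exact mul_le_of_le_one_left (by positivity) (cc_le_one _)

/-- the ODE relation between the sum and the termwise-derivative sum -/
lemma cc_ode {x : ℝ} (hx : |x| < 1) :
    (∑' n : ℕ, cc n * x ^ n)
      = 2 * (∑' n : ℕ, ((n : ℝ) + 1) * cc (n + 1) * x ^ n) * (1 - x) := by
  set S := ∑' n : ℕ, ((n : ℝ) + 1) * cc (n + 1) * x ^ n with hSdef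
  have hs : HasSum (fun n : ℕ => ((n : ℝ) + 1) * cc (n + 1) * x ^ n) S :=
    (cc_shift_summable hx).hasSum
  have hA : HasSum (fun n : ℕ => 2 * (((n : ℝ) + 1) * cc (n + 1) * x ^ n)) (2 * S) :=
    hs.mul_left 2
  have hB : HasSum (fun n : ℕ => 2 * (((n : ℝ) + 1) * cc (n + 1) * x ^ n) * x)
      (2 * S * x) := hA.mul_right x
  have hB2 : HasSum (fun n : ℕ => 2 * (n : ℝ) * cc n * x ^ n) (2 * S * x) := by
    have h1 : HasSum (fun n : ℕ =>
        (fun m : ℕ => 2 * (m : ℝ) * cc m * x ^ m) (n + 1)) (2 * S * x) :=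
      hB.congr_fun fun n => by push_cast; ring
    have h2 := (hasSum_nat_add_iff (f := fun n : ℕ => 2 * (n : ℝ) * cc n * x ^ n) 1).1 h1
    simpa using h2
  have hF : HasSum (fun n : ℕ => cc n * x ^ n) (2 * S - 2 * S * x) := by
    refine (hA.sub hB2).congr_fun fun n => ?_
    have h := cc_rec n
    linear_combination (-(x ^ n)) * h
  rw [hF.tsum_eq]
  ring

/-- derivative of the basic power series -/
lemma F_hasDerivAt {x : ℝ} (hx : |x| < 1) :
    HasDerivAt (fun y : ℝ => ∑' n : ℕ, cc n * y ^ n)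
      (∑' n : ℕ, ((n : ℝ) + 1) * cc (n + 1) * x ^ n) x := by
  set r : ℝ := (1 + |x|) / 2 with hr
  have hxr : |x| < r := by rw [hr]; linarith
  have hr0 : 0 ≤ r := le_trans (abs_nonneg x) hxr.le
  have hr1 : r < 1 := by rw [hr]; linarith
  have hu : Summable (fun n : ℕ => (n : ℝ) * r ^ (n - 1)) := by
    rw [← summable_nat_add_iff 1]
    have h1 : Summable fun n : ℕ => ((n : ℝ) + 1) * r ^ n := by
      have := summable_pow_mul_geometric_of_norm_lt_one 1
        (r := r) (by rwa [Real.norm_eq_abs, abs_of_nonneg hr0])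
      exact (this.add (summable_geometric_of_lt_one hr0 hr1)).congr fun n => by ring
    exact h1.congr fun n => by push_cast [Nat.add_sub_cancel]; ring
  have key : HasDerivAt (fun y : ℝ => ∑' n : ℕ, cc n * y ^ n)
      (∑' n : ℕ, cc n * ((n : ℝ) * x ^ (n - 1))) x := by
    refine hasDerivAt_tsum_of_isPreconnected (y₀ := x) hu Metric.isOpen_ball
      (convex_ball (0:ℝ) r).isPreconnected
      (g := fun n y => cc n * y ^ n)
      (g' := fun n y => cc n * ((n : ℝ) * y ^ (n - 1)))
      (fun n y _ => (hasDerivAt_pow n y).const_mul (cc n))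
      (fun n y hy => ?_) ?_ ?_ ?_
    · have hy' : |y| ≤ r := by
        rw [Metric.mem_ball, Real.dist_eq, sub_zero] at hy; exact hy.le
      calc ‖cc n * ((n : ℝ) * y ^ (n - 1))‖
          = cc n * ((n : ℝ) * |y| ^ (n - 1)) := by
            rw [norm_mul, norm_mul, Real.norm_eq_abs, Real.norm_eq_abs,
              Real.norm_eq_abs, abs_pow, abs_of_nonneg (cc_nonneg n),
              Nat.abs_cast]
        _ ≤ 1 * ((n : ℝ) * r ^ (n - 1)) := by
            apply mul_le_mul (cc_le_one n) ?_ (by positivity) one_pos.le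
            exact mul_le_mul_of_nonneg_left
              (pow_le_pow_left₀ (abs_nonneg y) hy' _) (Nat.cast_nonneg n)
        _ = (n : ℝ) * r ^ (n - 1) := one_mul _
    · rw [Metric.mem_ball, Real.dist_eq, sub_zero]; exact hxr
    · exact cc_summable hx
    · rw [Metric.mem_ball, Real.dist_eq, sub_zero]; exact hxr
  have hDsum : Summable fun n : ℕ => cc n * ((n : ℝ) * x ^ (n - 1)) := by
    apply Summable.of_norm_bounded hu
    intro n
    rw [norm_mul, norm_mul, Real.norm_eq_abs, Real.norm_eq_abs, Real.norm_eq_abs,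
      abs_pow, abs_of_nonneg (cc_nonneg n), Nat.abs_cast]
    calc cc n * ((n : ℝ) * |x| ^ (n - 1))
        ≤ 1 * ((n : ℝ) * |x| ^ (n - 1)) := by
          apply mul_le_mul_of_nonneg_right (cc_le_one n) (by positivity)
      _ = (n : ℝ) * |x| ^ (n - 1) := one_mul _
      _ ≤ (n : ℝ) * r ^ (n - 1) :=
          mul_le_mul_of_nonneg_left
            (pow_le_pow_left₀ (abs_nonneg x) hxr.le _) (Nat.cast_nonneg n)
  have hre : (∑' n : ℕ, cc n * ((n : ℝ) * x ^ (n - 1)))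
      = ∑' n : ℕ, ((n : ℝ) + 1) * cc (n + 1) * x ^ n := by
    rw [hDsum.tsum_eq_zero_add]
    simp only [Nat.cast_zero, zero_mul, mul_zero, zero_add]
    exact tsum_congr fun n => by simp only [Nat.add_sub_cancel]; push_cast; ring
  rw [hre] at key
  exact key

/-- closed form of the central binomial generating series -/
lemma F_val {b : ℝ} (hb0 : 0 ≤ b) (hb1 : b < 1) :
    (∑' n : ℕ, cc n * b ^ n) = 1 / Real.sqrt (1 - b) := by
  have hsq : (0:ℝ) < 1 - b := by linarith
  have hmain : ∀ x ∈ Icc (0:ℝ) b,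
      (fun y : ℝ => (∑' n : ℕ, cc n * y ^ n) * Real.sqrt (1 - y)) x
        = (fun y : ℝ => (∑' n : ℕ, cc n * y ^ n) * Real.sqrt (1 - y)) 0 := by
    have hderiv : ∀ x ∈ Icc (0:ℝ) b,
        HasDerivAt (fun y : ℝ => (∑' n : ℕ, cc n * y ^ n) * Real.sqrt (1 - y)) 0 x := by
      intro x hx
      have hx1 : |x| < 1 := by
        rw [abs_of_nonneg hx.1]; exact lt_of_le_of_lt hx.2 hb1
      have hpos : (0:ℝ) < 1 - x := by
        have := lt_of_le_of_lt hx.2 hb1; linarith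
      have hsne : Real.sqrt (1 - x) ≠ 0 := by positivity
      have hinner : HasDerivAt (fun y : ℝ => 1 - y) (-1) x := by
        simpa using (hasDerivAt_id x).const_sub 1
      have hsder : HasDerivAt (fun y : ℝ => Real.sqrt (1 - y))
          (-1 / (2 * Real.sqrt (1 - x))) x := hinner.sqrt (by positivity)
      have hFder := F_hasDerivAt hx1
      have hmul := hFder.mul hsder
      refine hmul.congr_deriv (Eq.symm ?_)
      have hode := cc_ode hx1
      rw [hode]
      have hss : Real.sqrt (1 - x) ^ 2 = 1 - x := Real.sq_sqrt hpos.le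
      field_simp
      linear_combination (-(∑' n : ℕ, ((n : ℝ) + 1) * cc (n + 1) * x ^ n)) * hss
    have hcont : ContinuousOn
        (fun y : ℝ => (∑' n : ℕ, cc n * y ^ n) * Real.sqrt (1 - y)) (Icc 0 b) :=
      fun x hx => ((hderiv x hx).continuousAt).continuousWithinAt
    exact constant_of_has_deriv_right_zero hcont
      (fun x hx => ((hderiv x (Ico_subset_Icc_self hx)).hasDerivWithinAt))
  have h0 : (∑' n : ℕ, cc n * (0:ℝ) ^ n) = 1 := by
    rw [tsum_eq_single 0 (fun n hn => by simp [zero_pow hn])]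
    simp [cc, Nat.centralBinom]
  have hb := hmain b ⟨hb0, le_refl b⟩
  simp only at hb
  rw [h0] at hb
  norm_num at hb
  have hne : Real.sqrt (1 - b) ≠ 0 := by positivity
  rw [eq_div_iff hne]
  exact hb


lemma B_eq (n : ℕ) :
    4 * ((n : ℝ) + 1) / ((4 * ((n : ℝ) + 1) ^ 2 - 1) * 4 ^ (n + 1)) *
        (Nat.choose (2 * (n + 1)) (n + 1) : ℝ)
      = 2 * cc n / (2 * (n : ℝ) + 3) := by
  have h := cB_rec n
  have hcb : (Nat.choose (2 * (n + 1)) (n + 1) : ℝ)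
      = (Nat.centralBinom (n + 1) : ℝ) := by rw [Nat.centralBinom]
  have h1 : (4 * ((n : ℝ) + 1) ^ 2 - 1) = (2 * n + 1) * (2 * n + 3) := by ring
  have hne1 : (2 * (n : ℝ) + 1) ≠ 0 := by positivity
  have hne2 : (2 * (n : ℝ) + 3) ≠ 0 := by positivity
  have h4 : (4 : ℝ) ^ n ≠ 0 := by positivity
  rw [hcb, h1, cc, pow_succ]
  field_simp
  linear_combination h

lemma G_hasDerivAt {t : ℝ} (ht : |t| < 1) :
    HasDerivAt (fun y : ℝ => ∑' n : ℕ, 2 * cc n / (2 * (n : ℝ) + 3) * y ^ (2 * n + 3))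
      (∑' n : ℕ, 2 * cc n * t ^ (2 * n + 2)) t := by
  set r : ℝ := (1 + |t|) / 2 with hr
  have htr : |t| < r := by rw [hr]; linarith
  have hr0 : 0 ≤ r := le_trans (abs_nonneg t) htr.le
  have hr1 : r < 1 := by rw [hr]; linarith
  have hu : Summable (fun n : ℕ => 2 * r ^ (2 * n + 2)) := by
    have hgeo : Summable (fun n : ℕ => (r ^ 2) ^ n) :=
      summable_geometric_of_lt_one (by positivity) (by nlinarith)
    exact (hgeo.mul_left (2 * r ^ 2)).congr fun n => by
      rw [← pow_mul]; ring_nf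
  refine hasDerivAt_tsum_of_isPreconnected (y₀ := t) hu Metric.isOpen_ball
    (convex_ball (0 : ℝ) r).isPreconnected
    (g := fun n y => 2 * cc n / (2 * (n : ℝ) + 3) * y ^ (2 * n + 3))
    (g' := fun n y => 2 * cc n * y ^ (2 * n + 2))
    (fun n y _ => ?_) (fun n y hy => ?_) ?_ ?_ ?_
  · have hp := (hasDerivAt_pow (2 * n + 3) y).const_mul (2 * cc n / (2 * (n : ℝ) + 3))
    refine hp.congr_deriv (Eq.symm ?_)
    have he : 2 * n + 3 - 1 = 2 * n + 2 := by omega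
    rw [he]
    have hne : (2 * (n : ℝ) + 3) ≠ 0 := by positivity
    push_cast
    field_simp
  · have hy' : |y| ≤ r := by
      rw [Metric.mem_ball, Real.dist_eq, sub_zero] at hy; exact hy.le
    rw [norm_mul, norm_mul, Real.norm_eq_abs, Real.norm_eq_abs, Real.norm_eq_abs, abs_pow]
    rw [abs_of_nonneg (cc_nonneg n)]
    have h1 : cc n * |y| ^ (2 * n + 2) ≤ 1 * r ^ (2 * n + 2) :=
      mul_le_mul (cc_le_one n)
        (pow_le_pow_left₀ (abs_nonneg y) hy' _) (by positivity) one_pos.le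
    have h2 : |(2 : ℝ)| = 2 := by norm_num
    rw [h2, mul_assoc]
    nlinarith [cc_nonneg n, pow_nonneg (abs_nonneg y) (2 * n + 2)]
  · rw [Metric.mem_ball, Real.dist_eq, sub_zero]; exact htr
  · apply Summable.of_norm_bounded hu
    intro n
    rw [norm_mul, norm_div, norm_mul, Real.norm_eq_abs, Real.norm_eq_abs,
      Real.norm_eq_abs, Real.norm_eq_abs, abs_pow]
    have hc1 : |(2 : ℝ)| * |cc n| / |2 * (n : ℝ) + 3| ≤ 2 := by
      rw [abs_of_nonneg (cc_nonneg n), abs_of_nonneg (by positivity : (0:ℝ) ≤ 2 * (n : ℝ) + 3)]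
      rw [div_le_iff₀ (by positivity)]
      have := cc_le_one n
      norm_num
      nlinarith [cc_nonneg n]
    have hc2 : |t| ^ (2 * n + 3) ≤ r ^ (2 * n + 2) := by
      calc |t| ^ (2 * n + 3) ≤ r ^ (2 * n + 3) :=
            pow_le_pow_left₀ (abs_nonneg t) htr.le _
        _ ≤ r ^ (2 * n + 2) := pow_le_pow_of_le_one hr0 hr1.le (by omega)
    exact mul_le_mul hc1 hc2 (by positivity) (by norm_num)
  · rw [Metric.mem_ball, Real.dist_eq, sub_zero]; exact htr

lemma G_deriv_val {t : ℝ} (ht0 : 0 ≤ t) (ht1 : t < 1) :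
    (∑' n : ℕ, 2 * cc n * t ^ (2 * n + 2)) = 2 * t ^ 2 / Real.sqrt (1 - t ^ 2) := by
  have hb : (∑' n : ℕ, cc n * (t ^ 2) ^ n) = 1 / Real.sqrt (1 - t ^ 2) :=
    F_val (sq_nonneg t) (by nlinarith)
  calc (∑' n : ℕ, 2 * cc n * t ^ (2 * n + 2))
      = ∑' n : ℕ, (2 * t ^ 2) * (cc n * (t ^ 2) ^ n) := by
        refine tsum_congr fun n => ?_
        rw [← pow_mul]
        ring_nf
    _ = (2 * t ^ 2) * ∑' n : ℕ, cc n * (t ^ 2) ^ n := tsum_mul_left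
    _ = 2 * t ^ 2 / Real.sqrt (1 - t ^ 2) := by rw [hb]; ring



/-- Power series identity: for `0 < μ < 1`,
`arcsin(μ)/μ − √(1−μ²) = Σ_{n=1}^∞ (4n/((4n²−1)·4ⁿ)) C(2n,n) μ^{2n}`,
where `C(2n,n)` is the central binomial coefficient. (The sum over `n ≥ 1` is written
as a sum over `n : ℕ` of the terms at `n+1`.) -/
theorem arcsin_sub_sqrt_series (μ : ℝ) (hμ₀ : 0 < μ) (hμ₁ : μ < 1) :
    Real.arcsin μ / μ - Real.sqrt (1 - μ ^ 2) =
      ∑' n : ℕ,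
        (4 * ((n : ℝ) + 1) / ((4 * ((n : ℝ) + 1) ^ 2 - 1) * 4 ^ (n + 1))) *
          (Nat.choose (2 * (n + 1)) (n + 1) : ℝ) * μ ^ (2 * (n + 1)) := by
  have hμa : |μ| < 1 := by rw [abs_of_pos hμ₀]; exact hμ₁
  set T := ∑' n : ℕ,
      (4 * ((n : ℝ) + 1) / ((4 * ((n : ℝ) + 1) ^ 2 - 1) * 4 ^ (n + 1))) *
        (Nat.choose (2 * (n + 1)) (n + 1) : ℝ) * μ ^ (2 * (n + 1)) with hT
  have hT2 : T = ∑' n : ℕ, 2 * cc n / (2 * (n : ℝ) + 3) * μ ^ (2 * n + 2) := by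
    rw [hT]
    refine tsum_congr fun n => ?_
    rw [B_eq, show 2 * (n + 1) = 2 * n + 2 from by ring]
  set G : ℝ → ℝ :=
    fun y => ∑' n : ℕ, 2 * cc n / (2 * (n : ℝ) + 3) * y ^ (2 * n + 3) with hG
  have hPder : ∀ t ∈ Icc (0 : ℝ) μ,
      HasDerivAt (fun y => Real.arcsin y - y * Real.sqrt (1 - y ^ 2) - G y) 0 t := by
    intro t ht
    have ht1 : t < 1 := lt_of_le_of_lt ht.2 hμ₁
    have hta : |t| < 1 := by rw [abs_of_nonneg ht.1]; exact ht1
    have hpos : (0 : ℝ) < 1 - t ^ 2 := by nlinarith [ht.1]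
    have hsne : Real.sqrt (1 - t ^ 2) ≠ 0 := by positivity
    have h1 : HasDerivAt Real.arcsin (1 / Real.sqrt (1 - t ^ 2)) t :=
      Real.hasDerivAt_arcsin (by nlinarith [ht.1] : t ≠ -1) (ht1.ne)
    have hinner : HasDerivAt (fun y : ℝ => 1 - y ^ 2) (-(2 * t)) t := by
      simpa using (hasDerivAt_pow 2 t).const_sub 1
    have hsder : HasDerivAt (fun y : ℝ => Real.sqrt (1 - y ^ 2))
        (-(2 * t) / (2 * Real.sqrt (1 - t ^ 2))) t := hinner.sqrt (by positivity)
    have h2 := (hasDerivAt_id t).mul hsder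
    have h3 : HasDerivAt G (2 * t ^ 2 / Real.sqrt (1 - t ^ 2)) t := by
      rw [hG]
      have hd := G_hasDerivAt hta
      rwa [G_deriv_val ht.1 ht1] at hd
    have h4 := (h1.sub h2).sub h3
    refine h4.congr_deriv (Eq.symm ?_)
    have hss : Real.sqrt (1 - t ^ 2) ^ 2 = 1 - t ^ 2 := Real.sq_sqrt hpos.le
    field_simp
    simp only [id_eq]
    linear_combination hss
  have hconst := constant_of_has_deriv_right_zero
    (fun t ht => ((hPder t ht).continuousAt).continuousWithinAt)
    (fun t ht => (hPder t (Ico_subset_Icc_self ht)).hasDerivWithinAt)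
    μ ⟨hμ₀.le, le_refl μ⟩
  have hG0 : G 0 = 0 := by
    rw [hG]
    convert tsum_zero with n
    simp
  simp only [Real.arcsin_zero, hG0] at hconst
  norm_num at hconst
  have hGμ : G μ = μ * T := by
    rw [hT2, hG, ← tsum_mul_left]
    refine tsum_congr fun n => ?_
    rw [pow_succ]
    ring
  have hμne : μ ≠ 0 := hμ₀.ne'
  field_simp
  linear_combination hconst + hGμ
end

section
/- Let S² ⊂ ℝ³ be the unit sphere equipped with its surface measure σ (total mass 4π). Let A and b be real numbers with A > b > 0. Then ∫_{S²} ∫_{S²} (b ω·ω')² / (A + b ω·ω') dσ(ω) dσ(ω') = (8π²/b) ( A² log( (A+b)/(A−b) ) − 2Ab ). -/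
open Real MeasureTheory
open scoped RealInnerProductSpace
open Set Metric

noncomputable section

lemma aux_radial : ∫ x in Set.Ioi (0:ℝ), (if x ≤ 1 then 3 * x^2 else 0) = 1 := by
  have h1 : (fun x : ℝ => if x ≤ 1 then 3 * x^2 else 0)
      = (Set.Iic (1:ℝ)).indicator (fun x => 3 * x^2) := by
    funext x; simp [Set.indicator_apply, Set.mem_Iic]
  rw [h1, setIntegral_indicator measurableSet_Iic, Set.Ioi_inter_Iic,
    ← intervalIntegral.integral_of_le (by norm_num : (0:ℝ) ≤ 1)]
  simp [intervalIntegral.integral_const_mul, integral_pow]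
  norm_num

lemma aux_theta (g : ℝ → ℝ) (hg : Continuous g) :
    ∫ θ in Set.Ioo (-π) π, |Real.sin θ| * g (Real.cos θ) = 2 * ∫ t in (-1:ℝ)..1, g t := by
  have hc : Continuous fun θ : ℝ => |Real.sin θ| * g (Real.cos θ) := by
    fun_prop
  have hle : (-π : ℝ) ≤ π := by linarith [Real.pi_pos]
  rw [← integral_Ioc_eq_integral_Ioo, ← intervalIntegral.integral_of_le hle]
  have hsplit : ∫ θ in (-π : ℝ)..π, |Real.sin θ| * g (Real.cos θ)
      = (∫ θ in (-π : ℝ)..0, |Real.sin θ| * g (Real.cos θ))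
        + ∫ θ in (0:ℝ)..π, |Real.sin θ| * g (Real.cos θ) :=
    (intervalIntegral.integral_add_adjacent_intervals
      (hc.intervalIntegrable _ _) (hc.intervalIntegrable _ _)).symm
  have hneg : ∫ θ in (-π : ℝ)..0, |Real.sin θ| * g (Real.cos θ)
      = ∫ θ in (0:ℝ)..π, |Real.sin θ| * g (Real.cos θ) := by
    rw [show (0:ℝ) = -(0:ℝ) by norm_num]
    rw [← intervalIntegral.integral_comp_neg (fun θ => |Real.sin θ| * g (Real.cos θ))]
    simp
  have hpos : ∫ θ in (0:ℝ)..π, |Real.sin θ| * g (Real.cos θ)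
      = ∫ t in (-1:ℝ)..1, g t := by
    have h1 : ∫ θ in (0:ℝ)..π, |Real.sin θ| * g (Real.cos θ)
        = ∫ θ in (0:ℝ)..π, Real.sin θ * g (Real.cos θ) := by
      apply intervalIntegral.integral_congr
      intro θ hθ
      rw [Set.uIcc_of_le Real.pi_pos.le] at hθ
      simp only
      rw [abs_of_nonneg (Real.sin_nonneg_of_mem_Icc hθ)]
    have h2 : ∫ θ in (0:ℝ)..π, (-Real.sin θ) • g (Real.cos θ)
        = ∫ t in (Real.cos 0)..(Real.cos π), g t := by
      apply intervalIntegral.integral_comp_smul_deriv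
      · intro x _; exact Real.hasDerivAt_cos x
      · exact (Real.continuous_sin.neg).continuousOn
      · exact hg
    rw [Real.cos_zero, Real.cos_pi, intervalIntegral.integral_symm (-1:ℝ) 1] at h2
    have h3 : ∀ θ, (-Real.sin θ) • g (Real.cos θ) = -(Real.sin θ * g (Real.cos θ)) := by
      intro θ; simp [smul_eq_mul]
    simp only [h3, intervalIntegral.integral_neg, neg_inj] at h2
    rw [h1, h2]
  rw [hsplit, hneg, hpos]; ring

lemma aux_interval (A b : ℝ) (hb : 0 < b) (hA : b < A) :
    ∫ t in (-1:ℝ)..1, (b*t)^2/(A+b*t) = A^2/b * Real.log ((A+b)/(A-b)) - 2*A := by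
  have hpos : ∀ t ∈ Set.uIcc (-1:ℝ) 1, 0 < A + b * t := by
    intro t ht
    rw [Set.uIcc_of_le (by norm_num : (-1:ℝ) ≤ 1)] at ht
    nlinarith [ht.1, ht.2]
  have hderiv : ∀ t ∈ Set.uIcc (-1:ℝ) 1,
      HasDerivAt (fun t => b*t^2/2 - A*t + (A^2/b) * Real.log (A+b*t))
        ((b*t)^2/(A+b*t)) t := by
    intro t ht
    have h1 : HasDerivAt (fun t : ℝ => A + b * t) b t := by
      simpa using ((hasDerivAt_id t).const_mul b).const_add A
    have h2 : HasDerivAt (fun t : ℝ => Real.log (A + b*t)) (b / (A+b*t)) t :=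
      h1.log (hpos t ht).ne'
    have h3 : HasDerivAt (fun t : ℝ => b*t^2/2 - A*t + (A^2/b) * Real.log (A+b*t))
        (b*t - A + (A^2/b) * (b/(A+b*t))) t := by
      have h4 := (((hasDerivAt_pow 2 t).const_mul b).div_const 2).sub
        ((hasDerivAt_id t).const_mul A)
      have h5 := h4.add (h2.const_mul (A^2/b))
      refine h5.congr_deriv ?_
      ring
    convert h3 using 1
    have h4 := (hpos t ht).ne'
    field_simp
    ring
  have hint : IntervalIntegrable (fun t => (b*t)^2/(A+b*t)) volume (-1:ℝ) 1 := by
    apply ContinuousOn.intervalIntegrable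
    apply ContinuousOn.div (by fun_prop) (by fun_prop)
    intro t ht; exact (hpos t ht).ne'
  rw [intervalIntegral.integral_eq_sub_of_hasDerivAt hderiv hint]
  have hab1 : (0:ℝ) < A + b := by linarith
  have hab2 : (0:ℝ) < A - b := by linarith
  have e1 : A + b * 1 = A + b := by ring
  have e2 : A + b * (-1) = A - b := by ring
  rw [e1, e2, Real.log_div hab1.ne' hab2.ne']
  ring

/-- profile function -/
def psi (g : ℝ → ℝ) (t r : ℝ) : ℝ :=
  if Real.sqrt (t^2+r^2) ≤ 1 then 3 * g (t/Real.sqrt (t^2+r^2)) else 0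

lemma harg (t r : ℝ) : |t / Real.sqrt (t^2+r^2)| ≤ 1 := by
  rcases eq_or_lt_of_le (Real.sqrt_nonneg (t^2+r^2)) with h | h
  · rw [← h]; simp
  · rw [abs_div, abs_of_pos h, div_le_one h]
    calc |t| = Real.sqrt (t^2) := (Real.sqrt_sq_eq_abs t).symm
    _ ≤ Real.sqrt (t^2+r^2) := Real.sqrt_le_sqrt (by nlinarith)

lemma psi_abs (g : ℝ → ℝ) (t r : ℝ) : psi g t |r| = psi g t r := by
  unfold psi; rw [sq_abs]

lemma psi_meas {g : ℝ → ℝ} (hg : Continuous g) :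
    Measurable fun p : ℝ × ℝ => psi g p.1 p.2 := by
  unfold psi
  apply Measurable.ite
  · exact measurableSet_le (by fun_prop) measurable_const
  · exact (hg.measurable.comp (Measurable.div measurable_fst (by fun_prop))).const_mul 3
  · exact measurable_const

lemma psi_supp {g : ℝ → ℝ} {t r : ℝ} (h : psi g t r ≠ 0) : |t| ≤ 1 ∧ |r| ≤ 1 := by
  unfold psi at h
  by_cases hc : Real.sqrt (t^2+r^2) ≤ 1
  · have h2 : t^2 + r^2 ≤ 1 := by
      have := Real.sq_sqrt (by positivity : (0:ℝ) ≤ t^2+r^2)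
      nlinarith [Real.sqrt_nonneg (t^2+r^2)]
    constructor <;> [skip; skip] <;> rw [abs_le] <;> constructor <;> nlinarith
  · simp [hc] at h

lemma psi_bound {g : ℝ → ℝ} {C : ℝ} (hC : ∀ u ∈ Icc (-1:ℝ) 1, |g u| ≤ C) (t r : ℝ) :
    |psi g t r| ≤ 3 * C := by
  have hC0 : 0 ≤ C := le_trans (abs_nonneg _) (hC 0 (by norm_num))
  unfold psi
  split_ifs with h
  · rw [abs_mul, abs_of_nonneg (by norm_num : (0:ℝ) ≤ 3)]
    have := hC (t / Real.sqrt (t^2+r^2)) (abs_le.1 (harg t r))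
    linarith
  · simpa using by positivity

/-- The planar integral. -/
lemma planar (g : ℝ → ℝ) (hg : Continuous g) :
    ∫ p : ℝ × ℝ, |p.2| * psi g p.1 p.2 = 2 * ∫ t in (-1:ℝ)..1, g t := by
  rw [← integral_comp_polarCoord_symm (fun p : ℝ × ℝ => |p.2| * psi g p.1 p.2)]
  rw [polarCoord_target]
  have key : EqOn (fun p : ℝ × ℝ => p.1 • (|((polarCoord.symm p).2)| *
      psi g (polarCoord.symm p).1 (polarCoord.symm p).2))
      (fun p : ℝ × ℝ => (if p.1 ≤ 1 then 3 * p.1^2 else 0) * (|Real.sin p.2| * g (Real.cos p.2)))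
      (Ioi (0:ℝ) ×ˢ Ioo (-π) π) := by
    intro p hp
    obtain ⟨hr, -⟩ := hp
    rw [mem_Ioi] at hr
    simp only [polarCoord_symm_apply]
    have hsq : (p.1 * Real.cos p.2)^2 + (p.1 * Real.sin p.2)^2 = p.1^2 := by
      have := Real.sin_sq_add_cos_sq p.2; nlinarith
    have hsqrt : Real.sqrt ((p.1 * Real.cos p.2)^2 + (p.1 * Real.sin p.2)^2) = p.1 := by
      rw [hsq]; exact Real.sqrt_sq hr.le
    unfold psi
    rw [hsqrt]
    simp only [smul_eq_mul]
    rw [abs_mul, abs_of_pos hr]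
    split_ifs with h
    · rw [mul_div_cancel_left₀ _ hr.ne']
      ring
    · ring
  rw [setIntegral_congr_fun (measurableSet_Ioi.prod measurableSet_Ioo) key]
  rw [Measure.volume_eq_prod, ← Measure.prod_restrict]
  rw [integral_prod_mul (μ := volume.restrict (Ioi (0:ℝ)))
    (ν := volume.restrict (Ioo (-π) π))
    (fun r => if r ≤ 1 then 3 * r^2 else 0) (fun θ => |Real.sin θ| * g (Real.cos θ))]
  rw [aux_radial, aux_theta g hg]
  ring
/-- 3D profile -/
def Phi (g : ℝ → ℝ) (p : ℝ × ℝ × ℝ) : ℝ := psi g p.1 (Real.sqrt (p.2.1^2+p.2.2^2))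

lemma Phi_meas {g : ℝ → ℝ} (hg : Continuous g) : Measurable (Phi g) := by
  unfold Phi psi
  apply Measurable.ite
  · exact measurableSet_le (by fun_prop) measurable_const
  · exact (hg.measurable.comp (Measurable.div measurable_fst (by fun_prop))).const_mul 3
  · exact measurable_const

lemma Phi_int {g : ℝ → ℝ} (hg : Continuous g) : Integrable (Phi g) := by
  obtain ⟨C, hC⟩ := isCompact_Icc.exists_bound_of_continuousOn
    (hg.continuousOn : ContinuousOn g (Icc (-1:ℝ) 1))
  simp only [Real.norm_eq_abs] at hC
  have hC0 : 0 ≤ C := le_trans (abs_nonneg _) (hC 0 (by norm_num))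
  have hbound : ∀ p : ℝ × ℝ × ℝ, ‖Phi g p‖ ≤
      (closedBall (0 : ℝ × ℝ × ℝ) 1).indicator (fun _ => 3 * C) p := by
    intro p
    rw [Real.norm_eq_abs]
    by_cases h : Phi g p = 0
    · rw [h, abs_zero]
      exact Set.indicator_nonneg (fun _ _ => by positivity) p
    · obtain ⟨h1, h2⟩ := psi_supp h
      rw [abs_of_nonneg (Real.sqrt_nonneg _)] at h2
      have hs : p.2.1^2 + p.2.2^2 ≤ 1 := by
        have := Real.sq_sqrt (by positivity : (0:ℝ) ≤ p.2.1^2+p.2.2^2)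
        nlinarith [Real.sqrt_nonneg (p.2.1^2+p.2.2^2)]
      have hmem : p ∈ closedBall (0 : ℝ × ℝ × ℝ) 1 := by
        rw [mem_closedBall_zero_iff, Prod.norm_def, Prod.norm_def]
        simp only [Real.norm_eq_abs]
        refine max_le (by linarith) (max_le ?_ ?_) <;> rw [abs_le] <;>
          constructor <;> nlinarith
      rw [Set.indicator_of_mem hmem]
      exact psi_bound hC _ _
  refine Integrable.mono' ?_ (Phi_meas hg).aestronglyMeasurable
    (Filter.Eventually.of_forall hbound)
  rw [integrable_indicator_iff measurableSet_closedBall]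
  exact integrableOn_const measure_closedBall_lt_top.ne

lemma Kprime_int {g : ℝ → ℝ} (hg : Continuous g) :
    Integrable (fun p : ℝ × ℝ => |p.2| * psi g p.1 p.2) := by
  obtain ⟨C, hC⟩ := isCompact_Icc.exists_bound_of_continuousOn
    (hg.continuousOn : ContinuousOn g (Icc (-1:ℝ) 1))
  simp only [Real.norm_eq_abs] at hC
  have hC0 : 0 ≤ C := le_trans (abs_nonneg _) (hC 0 (by norm_num))
  have hbound : ∀ p : ℝ × ℝ, ‖|p.2| * psi g p.1 p.2‖ ≤
      (closedBall (0 : ℝ × ℝ) 1).indicator (fun _ => 3 * C) p := by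
    intro p
    rw [Real.norm_eq_abs]
    by_cases h : psi g p.1 p.2 = 0
    · rw [h, mul_zero, abs_zero]
      exact Set.indicator_nonneg (fun _ _ => by positivity) p
    · obtain ⟨h1, h2⟩ := psi_supp h
      have hmem : p ∈ closedBall (0 : ℝ × ℝ) 1 := by
        rw [mem_closedBall_zero_iff, Prod.norm_def]
        simp only [Real.norm_eq_abs]
        exact max_le h1 h2
      rw [Set.indicator_of_mem hmem, abs_mul, abs_abs]
      calc |p.2| * |psi g p.1 p.2| ≤ 1 * (3*C) :=
        mul_le_mul h2 (psi_bound hC _ _) (abs_nonneg _) (by norm_num)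
      _ = 3 * C := by ring
  refine Integrable.mono' ?_ ?_ (Filter.Eventually.of_forall hbound)
  · rw [integrable_indicator_iff measurableSet_closedBall]
    exact integrableOn_const measure_closedBall_lt_top.ne
  · exact (((by fun_prop : Measurable fun p : ℝ × ℝ => |p.2|)).mul
      (psi_meas hg)).aestronglyMeasurable

/-- The Cartesian 3D integral. -/
lemma cart (g : ℝ → ℝ) (hg : Continuous g) :
    ∫ p : ℝ × ℝ × ℝ, Phi g p = 2 * π * ∫ t in (-1:ℝ)..1, g t := by
  have hint : Integrable (Phi g) ((volume : Measure ℝ).prod (volume : Measure (ℝ × ℝ))) := by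
    rw [← Measure.volume_eq_prod]; exact Phi_int hg
  rw [Measure.volume_eq_prod, integral_prod _ hint]
  have inner : ∀ t : ℝ, ∫ y : ℝ × ℝ, Phi g (t, y) = π * ∫ ρ : ℝ, |ρ| * psi g t ρ := by
    intro t
    rw [← integral_comp_polarCoord_symm (fun y : ℝ × ℝ => Phi g (t, y)), polarCoord_target]
    have key : EqOn (fun p : ℝ × ℝ => p.1 • Phi g (t, polarCoord.symm p))
        (fun p : ℝ × ℝ => (p.1 * psi g t p.1) * (fun _ : ℝ => (1:ℝ)) p.2)
        (Ioi (0:ℝ) ×ˢ Ioo (-π) π) := by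
      intro p hp
      obtain ⟨hr, -⟩ := hp
      rw [mem_Ioi] at hr
      simp only [polarCoord_symm_apply, smul_eq_mul]
      unfold Phi
      have hsq : (p.1 * Real.cos p.2)^2 + (p.1 * Real.sin p.2)^2 = p.1^2 := by
        have := Real.sin_sq_add_cos_sq p.2; nlinarith
      rw [hsq, Real.sqrt_sq hr.le]
      ring
    rw [setIntegral_congr_fun (measurableSet_Ioi.prod measurableSet_Ioo) key]
    rw [Measure.volume_eq_prod, ← Measure.prod_restrict]
    rw [integral_prod_mul (μ := volume.restrict (Ioi (0:ℝ)))
      (ν := volume.restrict (Ioo (-π) π)) (fun r => r * psi g t r) (fun _ => (1:ℝ))]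
    have habs : ∫ ρ : ℝ, |ρ| * psi g t ρ = 2 * ∫ r in Ioi (0:ℝ), r * psi g t r := by
      rw [← integral_comp_abs (f := fun u => u * psi g t u)]
      congr 1; funext ρ; rw [psi_abs]
    have hone : ∫ _θ in Ioo (-π) π, (1:ℝ) = 2 * π := by
      simp [Real.volume_Ioo]
      rw [max_eq_left (by linarith [Real.pi_pos])]
      ring
    rw [hone, habs]
    ring
  simp only [inner]
  rw [integral_const_mul]
  have hKint : Integrable (fun p : ℝ × ℝ => |p.2| * psi g p.1 p.2)
      ((volume : Measure ℝ).prod (volume : Measure ℝ)) := by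
    rw [← Measure.volume_eq_prod]; exact Kprime_int hg
  have hswap : ∫ t : ℝ, ∫ ρ : ℝ, |ρ| * psi g t ρ
      = ∫ p : ℝ × ℝ, |p.2| * psi g p.1 p.2 := by
    rw [Measure.volume_eq_prod, integral_prod _ hKint]
  rw [hswap, planar g hg]
  ring
local notation "E3" => EuclideanSpace ℝ (Fin 3)

lemma radial_density :
    ∫ r : Set.Ioi (0:ℝ), (if (r:ℝ) ≤ 1 then (3:ℝ) else 0) ∂(Measure.volumeIoiPow 2) = 1 := by
  simp only [Measure.volumeIoiPow, ENNReal.ofReal]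
  rw [integral_withDensity_eq_integral_smul ((measurable_subtype_coe.pow_const 2).real_toNNReal)]
  rw [integral_subtype_comap measurableSet_Ioi
    (fun a : ℝ => (a^2).toNNReal • (if a ≤ 1 then (3:ℝ) else 0))]
  have hcong : EqOn (fun a : ℝ => (a^2).toNNReal • (if a ≤ 1 then (3:ℝ) else 0))
      (fun a : ℝ => if a ≤ 1 then 3 * a^2 else 0) (Ioi 0) := by
    intro x hx
    simp only [NNReal.smul_def, Real.coe_toNNReal _ (pow_nonneg (le_of_lt hx) _)]
    by_cases h : x ≤ 1 <;> simp [h] <;> ring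
  rw [setIntegral_congr_fun measurableSet_Ioi hcong]
  exact aux_radial

lemma stepA (g : ℝ → ℝ) (v : E3) :
    ∫ x : E3, (if ‖x‖ ≤ 1 then 3 * g (⟪v, x⟫/‖x‖) else 0)
      = ∫ ω : sphere (0 : E3) 1, g ⟪v, (ω : E3)⟫
          ∂(volume : Measure E3).toSphere := by
  have hdim : Module.finrank ℝ E3 - 1 = 2 := by
    rw [finrank_euclideanSpace_fin]
  have h1 : ∫ x : E3, (if ‖x‖ ≤ 1 then 3 * g (⟪v, x⟫/‖x‖) else 0)
      = ∫ x : ({(0:E3)}ᶜ : Set E3), (if ‖(x:E3)‖ ≤ 1 then 3 * g (⟪v, (x:E3)⟫/‖(x:E3)‖) else 0)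
          ∂((volume : Measure E3).comap Subtype.val) := by
    have h0 := integral_subtype_comap (μ := (volume : Measure E3)) ((measurableSet_singleton (0:E3)).compl)
      (fun x : E3 => if ‖x‖ ≤ 1 then 3 * g (⟪v, x⟫/‖x‖) else 0)
    rw [restrict_compl_singleton] at h0
    exact h0.symm
  have h2 : ∀ x : ({(0:E3)}ᶜ : Set E3),
      (if ‖(x:E3)‖ ≤ 1 then 3 * g (⟪v, (x:E3)⟫/‖(x:E3)‖) else 0)
      = (fun q : sphere (0:E3) 1 × Set.Ioi (0:ℝ) =>
          g ⟪v, (q.1 : E3)⟫ * (if (q.2 : ℝ) ≤ 1 then (3:ℝ) else 0))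
          (homeomorphUnitSphereProd E3 x) := by
    intro x
    simp only [homeomorphUnitSphereProd_apply_fst_coe,
      homeomorphUnitSphereProd_apply_snd_coe]
    rw [real_inner_smul_right]
    by_cases h : ‖(x:E3)‖ ≤ 1 <;> simp [h] <;> rw [div_eq_inv_mul] <;> ring
  have h3 : ∫ x : ({(0:E3)}ᶜ : Set E3),
        (if ‖(x:E3)‖ ≤ 1 then 3 * g (⟪v, (x:E3)⟫/‖(x:E3)‖) else 0)
          ∂((volume : Measure E3).comap Subtype.val)
      = ∫ q : sphere (0:E3) 1 × Set.Ioi (0:ℝ),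
          g ⟪v, (q.1 : E3)⟫ * (if (q.2 : ℝ) ≤ 1 then (3:ℝ) else 0)
          ∂(((volume : Measure E3).toSphere).prod
            (Measure.volumeIoiPow (Module.finrank ℝ E3 - 1))) := by
    rw [← (volume.measurePreserving_homeomorphUnitSphereProd).integral_comp
      (Homeomorph.measurableEmbedding _)
      (fun q : sphere (0:E3) 1 × Set.Ioi (0:ℝ) =>
        g ⟪v, (q.1 : E3)⟫ * (if (q.2 : ℝ) ≤ 1 then (3:ℝ) else 0))]
    congr 1
    funext x
    exact h2 x
  rw [h1, h3, hdim]
  rw [integral_prod_mul (fun ω : sphere (0:E3) 1 => g ⟪v, (ω : E3)⟫)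
    (fun r : Set.Ioi (0:ℝ) => if (r:ℝ) ≤ 1 then (3:ℝ) else 0)]
  rw [radial_density, mul_one]

lemma sphere_mass :
    (((volume : Measure E3).toSphere) Set.univ).toReal = 4 * π := by
  rw [Measure.toSphere_apply_univ, EuclideanSpace.volume_ball]
  have hγ : Real.Gamma ((3:ℝ)/2 + 1) = 3/4 * Real.sqrt π := by
    have h1 : Real.Gamma ((1:ℝ)/2 + 1) = 1/2 * Real.sqrt π := by
      rw [Real.Gamma_add_one (s := (1:ℝ)/2) (by norm_num), Real.Gamma_one_half_eq]
    have h2 : Real.Gamma ((3:ℝ)/2 + 1) = 3/2 * Real.Gamma (3/2) :=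
      Real.Gamma_add_one (s := (3:ℝ)/2) (by norm_num)
    have h3 : (3:ℝ)/2 = 1/2 + 1 := by norm_num
    rw [h2, h3, h1]; ring
  have hsqrtpi : Real.sqrt π > 0 := Real.sqrt_pos.2 Real.pi_pos
  have hval : Real.sqrt π ^ 3 / Real.Gamma ((3:ℝ)/2 + 1) = 4/3 * π := by
    rw [hγ]
    have h3 : Real.sqrt π ^ 3 = π * Real.sqrt π := by
      rw [pow_succ, pow_two, Real.mul_self_sqrt Real.pi_pos.le]
    rw [h3]
    field_simp
  have hcard : (Fintype.card (Fin 3)) = 3 := by simp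
  rw [finrank_euclideanSpace_fin, hcard]
  rw [show ((3:ℕ):ℝ) = (3:ℝ) by norm_num]
  have heq : ENNReal.ofReal (1:ℝ) ^ 3 *
      ENNReal.ofReal (Real.sqrt π ^ 3 / Real.Gamma ((3:ℝ)/2 + 1))
      = ENNReal.ofReal (4/3 * π) := by
    rw [hval, ENNReal.ofReal_one, one_pow, one_mul]
  rw [heq]
  rw [ENNReal.toReal_mul, ENNReal.toReal_natCast, ENNReal.toReal_ofReal (by positivity)]
  push_cast
  ring
lemma stepB (g : ℝ → ℝ) (v : E3) (hv : ‖v‖ = 1) :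
    ∫ x : E3, (if ‖x‖ ≤ 1 then 3 * g (⟪v, x⟫/‖x‖) else 0)
      = ∫ p : ℝ × ℝ × ℝ, Phi g p := by
  classical
  have horth : Orthonormal ℝ (Set.restrict {0} (fun _ : Fin 3 => v)) := by
    constructor
    · intro i; exact hv
    · intro i j hij
      exfalso; apply hij
      ext
      have hi := i.2; have hj := j.2
      simp only [Set.mem_singleton_iff] at hi hj
      rw [hi, hj]
  obtain ⟨b, hb⟩ := horth.exists_orthonormalBasis_extension_of_card_eq
    (by simp [finrank_euclideanSpace_fin])
  have hb0 : b 0 = v := hb 0 rfl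
  -- L0 = L1
  have m1 := (b.measurePreserving_repr).integral_comp
      (b.repr.toHomeomorph.measurableEmbedding)
      (fun y : EuclideanSpace ℝ (Fin 3) => if ‖y‖ ≤ 1 then 3 * g (y 0 / ‖y‖) else 0)
  have e1 : ∀ x : E3,
      (if ‖b.repr x‖ ≤ 1 then 3 * g ((b.repr x) 0 / ‖b.repr x‖) else 0)
      = (if ‖x‖ ≤ 1 then 3 * g (⟪v, x⟫/‖x‖) else 0) := by
    intro x
    rw [LinearIsometryEquiv.norm_map, OrthonormalBasis.repr_apply_apply, hb0]
  -- L1 = L2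
  have m2 := (EuclideanSpace.volume_preserving_symm_measurableEquiv_toLp (Fin 3)).integral_comp
      (MeasurableEquiv.measurableEmbedding _)
      (fun w : Fin 3 → ℝ => if Real.sqrt (w 0^2 + w 1^2 + w 2^2) ≤ 1
        then 3 * g (w 0 / Real.sqrt (w 0^2 + w 1^2 + w 2^2)) else 0)
  have e2 : ∀ y : EuclideanSpace ℝ (Fin 3),
      (if Real.sqrt (((MeasurableEquiv.toLp 2 (Fin 3 → ℝ)).symm y) 0^2
          + ((MeasurableEquiv.toLp 2 (Fin 3 → ℝ)).symm y) 1^2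
          + ((MeasurableEquiv.toLp 2 (Fin 3 → ℝ)).symm y) 2^2) ≤ 1
        then 3 * g (((MeasurableEquiv.toLp 2 (Fin 3 → ℝ)).symm y) 0
          / Real.sqrt (((MeasurableEquiv.toLp 2 (Fin 3 → ℝ)).symm y) 0^2
          + ((MeasurableEquiv.toLp 2 (Fin 3 → ℝ)).symm y) 1^2
          + ((MeasurableEquiv.toLp 2 (Fin 3 → ℝ)).symm y) 2^2)) else 0)
      = (if ‖y‖ ≤ 1 then 3 * g (y 0 / ‖y‖) else 0) := by
    intro y
    have hnorm : ‖y‖ = Real.sqrt (y 0^2 + y 1^2 + y 2^2) := by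
      rw [EuclideanSpace.norm_eq]
      congr 1
      rw [Fin.sum_univ_three]
      simp [Real.norm_eq_abs, sq_abs]
    have hcoe : ∀ i, ((MeasurableEquiv.toLp 2 (Fin 3 → ℝ)).symm y) i = y i := fun _ => rfl
    simp only [hcoe, hnorm]
  -- L2 = L3
  have m3 := (volume_preserving_piFinSuccAbove (fun _ : Fin 3 => ℝ) 0).integral_comp
      (MeasurableEquiv.measurableEmbedding _)
      (fun q : ℝ × (Fin 2 → ℝ) => if Real.sqrt (q.1^2 + q.2 0^2 + q.2 1^2) ≤ 1
        then 3 * g (q.1 / Real.sqrt (q.1^2 + q.2 0^2 + q.2 1^2)) else 0)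
  have e3 : ∀ w : Fin 3 → ℝ,
      ((fun q : ℝ × (Fin 2 → ℝ) => if Real.sqrt (q.1^2 + q.2 0^2 + q.2 1^2) ≤ 1
        then 3 * g (q.1 / Real.sqrt (q.1^2 + q.2 0^2 + q.2 1^2)) else 0)
        (MeasurableEquiv.piFinSuccAbove (fun _ : Fin 3 => ℝ) 0 w))
      = (if Real.sqrt (w 0^2 + w 1^2 + w 2^2) ≤ 1
        then 3 * g (w 0 / Real.sqrt (w 0^2 + w 1^2 + w 2^2)) else 0) := by
    intro w
    rfl
  -- L3 = L4
  have m4 : MeasurePreserving (Prod.map (id : ℝ → ℝ) (⇑MeasurableEquiv.finTwoArrow))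
      ((volume : Measure ℝ).prod (volume : Measure (Fin 2 → ℝ)))
      ((volume : Measure ℝ).prod (volume : Measure (ℝ × ℝ))) :=
    (MeasurePreserving.id (volume : Measure ℝ)).prod (volume_preserving_finTwoArrow ℝ)
  have m4emb : MeasurableEmbedding
      (Prod.map (id : ℝ → ℝ) (⇑(MeasurableEquiv.finTwoArrow (α := ℝ)))) :=
    ((MeasurableEquiv.refl ℝ).prodCongr (MeasurableEquiv.finTwoArrow (α := ℝ))).measurableEmbedding
  have m4' := m4.integral_comp m4emb (Phi g)
  have e4 : ∀ q : ℝ × (Fin 2 → ℝ),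
      Phi g (Prod.map (id : ℝ → ℝ) (⇑MeasurableEquiv.finTwoArrow) q)
      = (if Real.sqrt (q.1^2 + q.2 0^2 + q.2 1^2) ≤ 1
        then 3 * g (q.1 / Real.sqrt (q.1^2 + q.2 0^2 + q.2 1^2)) else 0) := by
    intro q
    show psi g q.1 (Real.sqrt ((q.2 0)^2 + (q.2 1)^2)) = _
    unfold psi
    rw [Real.sq_sqrt (by positivity), ← add_assoc]
  calc ∫ x : E3, (if ‖x‖ ≤ 1 then 3 * g (⟪v, x⟫/‖x‖) else 0)
      = ∫ y : EuclideanSpace ℝ (Fin 3), (if ‖y‖ ≤ 1 then 3 * g (y 0 / ‖y‖) else 0) := by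
        rw [← m1]; congr 1; funext x; exact (e1 x).symm
    _ = ∫ w : Fin 3 → ℝ, (if Real.sqrt (w 0^2 + w 1^2 + w 2^2) ≤ 1
        then 3 * g (w 0 / Real.sqrt (w 0^2 + w 1^2 + w 2^2)) else 0) := by
        rw [← m2]; congr 1; funext y; exact (e2 y).symm
    _ = ∫ q : ℝ × (Fin 2 → ℝ), (if Real.sqrt (q.1^2 + q.2 0^2 + q.2 1^2) ≤ 1
        then 3 * g (q.1 / Real.sqrt (q.1^2 + q.2 0^2 + q.2 1^2)) else 0) := by
        rw [← m3]; congr 1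
    _ = ∫ p : ℝ × ℝ × ℝ, Phi g p := by
        rw [Measure.volume_eq_prod (α := ℝ) (β := Fin 2 → ℝ),
          Measure.volume_eq_prod (α := ℝ) (β := ℝ × ℝ), ← m4']
        congr 1; funext q; exact (e4 q).symm
    
lemma latitude (g : ℝ → ℝ) (hg : Continuous g) (v : E3) (hv : ‖v‖ = 1) :
    ∫ ω : sphere (0 : E3) 1, g ⟪v, (ω : E3)⟫ ∂(volume : Measure E3).toSphere
      = 2 * π * ∫ t in (-1:ℝ)..1, g t := by
  rw [← stepA g v, stepB g v hv, cart g hg]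

/-- The surface measure on the unit sphere `S² ⊂ ℝ³` (total mass `4π`). -/
def sphereMeasure : Measure (Metric.sphere (0 : EuclideanSpace ℝ (Fin 3)) 1) :=
  (volume : Measure (EuclideanSpace ℝ (Fin 3))).toSphere

/-- Closed-form evaluation of the angular part of the three-body scattering integral:
for real numbers `A > b > 0`,
`∫_{S²} ∫_{S²} (b ω·ω')²/(A + b ω·ω') dσ(ω) dσ(ω')
  = (8π²/b)(A² log((A+b)/(A−b)) − 2Ab)`. -/
theorem sphere_double_integral_energy_denominator (A b : ℝ) (hb : 0 < b) (hA : b < A) :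
    ∫ ω, ∫ ω',
        (b * ⟪(ω : EuclideanSpace ℝ (Fin 3)), (ω' : EuclideanSpace ℝ (Fin 3))⟫) ^ 2 /
          (A + b * ⟪(ω : EuclideanSpace ℝ (Fin 3)), (ω' : EuclideanSpace ℝ (Fin 3))⟫)
        ∂sphereMeasure ∂sphereMeasure =
      (8 * π ^ 2 / b) * (A ^ 2 * Real.log ((A + b) / (A - b)) - 2 * A * b) := by
  have hden : ∀ t : ℝ, 0 < A + b * max (-1) (min 1 t) := by
    intro t
    have h1 : -1 ≤ max (-1) (min 1 t) := le_max_left _ _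
    have h2 : max (-1) (min 1 t) ≤ 1 := max_le (by linarith) (min_le_left _ _)
    nlinarith
  set G : ℝ → ℝ := fun t => (b*t)^2 / (A + b * max (-1) (min 1 t)) with hG
  have hcont : Continuous G := by
    apply Continuous.div (by fun_prop) (by fun_prop)
    intro t; exact (hden t).ne'
  have hval : ∀ s : ℝ, |s| ≤ 1 → G s = (b*s)^2/(A+b*s) := by
    intro s hs
    rw [hG]
    simp only
    rw [min_eq_right (abs_le.1 hs).2, max_eq_right (abs_le.1 hs).1]
  have hI : ∫ t in (-1:ℝ)..1, G t = A^2/b * Real.log ((A+b)/(A-b)) - 2*A := by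
    rw [← aux_interval A b hb hA]
    apply intervalIntegral.integral_congr
    intro s hs
    rw [Set.uIcc_of_le (by norm_num : (-1:ℝ) ≤ 1)] at hs
    exact hval s (abs_le.2 ⟨hs.1, hs.2⟩)
  have hnorm : ∀ ω : Metric.sphere (0 : E3) 1, ‖(ω : E3)‖ = 1 := by
    intro ω
    have := ω.2
    rwa [mem_sphere_zero_iff_norm] at this
  have hinner : ∀ ω : Metric.sphere (0 : E3) 1,
      (∫ ω' : Metric.sphere (0 : E3) 1,
        (b * ⟪(ω : E3), (ω' : E3)⟫) ^ 2 / (A + b * ⟪(ω : E3), (ω' : E3)⟫) ∂sphereMeasure)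
      = 2 * π * ∫ t in (-1:ℝ)..1, G t := by
    intro ω
    rw [← latitude G hcont (ω : E3) (hnorm ω)]
    show _ = ∫ ω' : Metric.sphere (0 : E3) 1, G ⟪(ω : E3), (ω' : E3)⟫ ∂sphereMeasure
    congr 1
    funext ω'
    have habs : |⟪(ω : E3), (ω' : E3)⟫| ≤ 1 := by
      have := abs_real_inner_le_norm (ω : E3) (ω' : E3)
      rw [hnorm ω, hnorm ω'] at this
      simpa using this
    rw [hval _ habs]
  calc ∫ ω, ∫ ω',
        (b * ⟪(ω : EuclideanSpace ℝ (Fin 3)), (ω' : EuclideanSpace ℝ (Fin 3))⟫) ^ 2 /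
          (A + b * ⟪(ω : EuclideanSpace ℝ (Fin 3)), (ω' : EuclideanSpace ℝ (Fin 3))⟫)
        ∂sphereMeasure ∂sphereMeasure
      = ∫ _ω : Metric.sphere (0 : E3) 1, (2 * π * ∫ t in (-1:ℝ)..1, G t) ∂sphereMeasure := by
        congr 1
        funext ω
        exact hinner ω
    _ = (sphereMeasure Set.univ).toReal • (2 * π * ∫ t in (-1:ℝ)..1, G t) := integral_const _
    _ = (8 * π ^ 2 / b) * (A ^ 2 * Real.log ((A + b) / (A - b)) - 2 * A * b) := by
        rw [hI]
        have hm : (sphereMeasure Set.univ).toReal = 4 * π := sphere_mass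
        rw [hm, smul_eq_mul]
        field_simp
        ring
end
end

section
/- For the momentum lattice (2πℤ)³ ⊂ ℝ³, lim_{Λ→∞} Λ · Σ_{k ∈ (2πℤ)³, |k| > Λ} 1/|k|⁴ = 1/(2π²). -/
open Real Filter
open scoped Classical

open MeasureTheory Set Metric
open scoped ENNReal

noncomputable section

/-- The Euclidean norm of the point `2πk` of the momentum lattice `(2πℤ)³ ⊂ ℝ³`. -/
def latticeNorm (k : Fin 3 → ℤ) : ℝ :=
  2 * π * Real.sqrt (∑ i, ((k i : ℝ)) ^ 2)

abbrev E3 := EuclideanSpace ℝ (Fin 3)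

def ι3 (k : Fin 3 → ℤ) : E3 := WithLp.toLp 2 (fun i => (k i : ℝ))

def nrm (k : Fin 3 → ℤ) : ℝ := ‖ι3 k‖

lemma vol_ball3 : volume (ball (0:E3) 1) = ENNReal.ofReal (4 * π / 3) := by
  rw [EuclideanSpace.volume_ball]
  simp only [Fintype.card_fin]
  norm_num
  rw [show (5:ℝ)/2 = 3/2 + 1 by norm_num, Real.Gamma_add_one (by norm_num),
    show (3:ℝ)/2 = 1/2 + 1 by norm_num, Real.Gamma_add_one (by norm_num),
    Real.Gamma_one_half_eq]
  rw [show √π ^ 3 = π * √π by rw [pow_succ, sq_sqrt pi_pos.le]]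
  congr 1
  have h : √π > 0 := sqrt_pos.mpr pi_pos
  field_simp; ring

def g (a : ℝ) (r : ℝ) : ℝ := if a < r then (r ^ 4)⁻¹ else 0

lemma g_nonneg (a r : ℝ) : 0 ≤ g a r := by
  unfold g; split <;> positivity

lemma measurable_g_norm (a : ℝ) : Measurable (fun x : E3 => g a ‖x‖) := by
  unfold g
  exact Measurable.ite (measurableSet_lt measurable_const measurable_norm)
    ((measurable_norm.pow_const 4).inv) measurable_const

lemma integral_g (a : ℝ) (ha : 0 < a) : ∫ x : E3, g a ‖x‖ = 4 * π / a := by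
  rw [MeasureTheory.integral_fun_norm_addHaar volume (g a), measureReal_def, vol_ball3]
  have hd : Module.finrank ℝ E3 = 3 := by simp [finrank_euclideanSpace]
  rw [hd]
  have h1 : (∫ y in Ioi (0:ℝ), y ^ (3 - 1) • g a y) = 1 / a := by
    have he : ∀ y ∈ Ioi (0:ℝ), y ^ 2 • g a y
        = (Ioi a).indicator (fun y : ℝ => y ^ (-2:ℝ)) y := by
      intro y hy
      simp only [smul_eq_mul, g, indicator]
      by_cases h : a < y
      · simp only [h, if_true, mem_Ioi, h]
        rw [rpow_neg (le_of_lt (mem_Ioi.mp hy)), show (2:ℝ) = ((2:ℕ):ℝ) by norm_num,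
          rpow_natCast]
        have hy0 : (0:ℝ) < y := mem_Ioi.mp hy
        field_simp
      · simp [h, mem_Ioi]
    rw [show (3 - 1) = 2 from rfl, setIntegral_congr_fun measurableSet_Ioi he,
      setIntegral_indicator measurableSet_Ioi,
      show Ioi (0:ℝ) ∩ Ioi a = Ioi a by rw [inter_eq_right]; exact fun y hy => lt_trans ha hy,
      integral_Ioi_rpow_of_lt (by norm_num) ha]
    rw [show (-2:ℝ) + 1 = -1 by norm_num, rpow_neg_one]
    field_simp
  rw [h1]
  rw [ENNReal.toReal_ofReal (by positivity)]
  simp only [nsmul_eq_mul, smul_eq_mul]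
  field_simp
  ring

lemma integrable_g (a : ℝ) (ha : 0 < a) : Integrable (fun x : E3 => g a ‖x‖) := by
  have hbase : Integrable (fun x : E3 => (1 + 1/a)^4 * ((1 + ‖x‖) ^ (-(4:ℝ)))) := by
    refine Integrable.const_mul ?_ _
    apply integrable_one_add_norm (E := E3)
    rw [finrank_euclideanSpace]; norm_num
  refine hbase.mono' (measurable_g_norm a).aestronglyMeasurable ?_
  refine Filter.Eventually.of_forall fun x => ?_
  rw [Real.norm_eq_abs, abs_of_nonneg (g_nonneg a _)]
  unfold g
  split
  · rename_i h
    have hx : 0 < ‖x‖ := lt_trans ha h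
    have h1 : (1 + ‖x‖) ^ (-(4:ℝ)) = ((1 + ‖x‖) ^ (4:ℕ))⁻¹ := by
      rw [rpow_neg (by positivity), show (4:ℝ) = ((4:ℕ):ℝ) by norm_num, rpow_natCast]
    rw [h1]
    have h2 : (1 + ‖x‖) ^ (4:ℕ) ≤ ((1 + 1/a) * ‖x‖) ^ (4:ℕ) := by
      gcongr
      have : (1:ℝ) ≤ ‖x‖ / a := (one_le_div ha).mpr (le_of_lt h)
      have h3 : 1 ≤ ‖x‖ / a := this
      rw [add_mul, one_mul]
      have : 1/a * ‖x‖ = ‖x‖ / a := by ring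
      rw [this]; linarith
    rw [mul_pow] at h2
    rw [inv_le_iff_one_le_mul₀ (by positivity)]
    rw [show (1 + 1/a)^4 * ((1 + ‖x‖) ^ 4)⁻¹ * ‖x‖^4
      = ((1 + 1/a)^4 * ‖x‖^4) / (1 + ‖x‖)^4 by ring]
    rw [le_div_iff₀ (by positivity), one_mul]
    exact h2
  · positivity

def cube (k : Fin 3 → ℤ) : Set E3 :=
  (MeasurableEquiv.toLp 2 (Fin 3 → ℝ)).symm ⁻¹' (univ.pi fun i => Ico (k i : ℝ) (k i + 1))

lemma mem_cube {k : Fin 3 → ℤ} {x : E3} :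
    x ∈ cube k ↔ ∀ i, (k i : ℝ) ≤ x i ∧ x i < k i + 1 := by
  simp only [cube, mem_preimage, MeasurableEquiv.coe_toLp_symm, Set.mem_pi, mem_univ,
    forall_true_left, mem_Ico]

lemma measurableSet_cube (k : Fin 3 → ℤ) : MeasurableSet (cube k) :=
  (MeasurableEquiv.toLp 2 (Fin 3 → ℝ)).symm.measurable
    (MeasurableSet.univ_pi fun _ => measurableSet_Ico)

lemma volume_cube (k : Fin 3 → ℤ) : volume (cube k) = 1 := by
  rw [cube, (EuclideanSpace.volume_preserving_symm_measurableEquiv_toLp (Fin 3)).measure_preimage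
    (MeasurableSet.univ_pi fun _ => measurableSet_Ico).nullMeasurableSet]
  rw [volume_pi_pi]
  simp [Real.volume_Ico]

lemma cube_disjoint : Pairwise (Function.onFun Disjoint cube) := by
  intro k k' hkk'
  rw [Function.onFun, Set.disjoint_left]
  intro x hx hx'
  apply hkk'
  funext i
  have h1 := (mem_cube.mp hx) i
  have h2 := (mem_cube.mp hx') i
  have e1 : ⌊x i⌋ = k i := Int.floor_eq_iff.mpr ⟨h1.1, h1.2⟩
  have e2 : ⌊x i⌋ = k' i := Int.floor_eq_iff.mpr ⟨h2.1, h2.2⟩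
  rw [← e1, ← e2]

lemma iUnion_cube : (⋃ k, cube k) = (univ : Set E3) := by
  rw [eq_univ_iff_forall]
  intro x
  refine mem_iUnion.mpr ⟨fun i => ⌊x i⌋, mem_cube.mpr fun i => ⟨Int.floor_le _, Int.lt_floor_add_one _⟩⟩

lemma norm_sub_le_of_mem_cube {k : Fin 3 → ℤ} {x : E3} (hx : x ∈ cube k) :
    ‖x - ι3 k‖ ≤ √3 := by
  rw [EuclideanSpace.norm_eq]
  have : ∀ i, ‖(x - ι3 k) i‖ ^ 2 ≤ 1 := by
    intro i
    have h := mem_cube.mp hx i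
    have hsub : (x - ι3 k) i = x i - (k i : ℝ) := rfl
    rw [hsub, Real.norm_eq_abs, sq_abs]
    nlinarith [h.1, h.2]
  apply Real.sqrt_le_sqrt
  calc ∑ i, ‖(x - ι3 k) i‖ ^ 2 ≤ ∑ _i : Fin 3, (1:ℝ) := Finset.sum_le_sum fun i _ => this i
    _ = 3 := by simp

lemma sqrt3_lt_two : √3 < 2 := by
  rw [show (2:ℝ) = √4 by rw [show (4:ℝ) = 2^2 by norm_num, Real.sqrt_sq (by norm_num)]]
  exact Real.sqrt_lt_sqrt (by norm_num) (by norm_num)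

lemma norm_le_of_mem_cube {k : Fin 3 → ℤ} {x : E3} (hx : x ∈ cube k) :
    ‖x‖ ≤ nrm k + √3 := by
  have := norm_sub_le_of_mem_cube hx
  have h := norm_sub_norm_le x (ι3 k)
  rw [nrm]; linarith [le_trans h this]

lemma nrm_le_of_mem_cube {k : Fin 3 → ℤ} {x : E3} (hx : x ∈ cube k) :
    nrm k ≤ ‖x‖ + √3 := by
  have := norm_sub_le_of_mem_cube hx
  have h := norm_sub_norm_le (ι3 k) x
  rw [norm_sub_rev] at h
  rw [nrm]; linarith [le_trans h this]

lemma inv_pow4_le {b x C : ℝ} (hb : 0 < b) (hx : 0 < x) (hC : 0 < C) (h : x ≤ C * b) :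
    (b ^ 4)⁻¹ ≤ C ^ 4 * (x ^ 4)⁻¹ := by
  have h4 : x ^ 4 ≤ C ^ 4 * b ^ 4 := by
    calc x ^ 4 ≤ (C * b) ^ 4 := by gcongr
      _ = C ^ 4 * b ^ 4 := mul_pow _ _ _
  rw [inv_le_iff_one_le_mul₀ (by positivity),
    show C ^ 4 * (x ^ 4)⁻¹ * b ^ 4 = (C ^ 4 * b ^ 4) / (x ^ 4) by ring,
    le_div_iff₀ (by positivity), one_mul]
  exact h4

def F (R : ℝ) (k : Fin 3 → ℤ) : ℝ≥0∞ :=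
  ENNReal.ofReal (if R < nrm k then (nrm k ^ 4)⁻¹ else 0)

lemma tsum_F_le (R : ℝ) (hR : 2 ≤ R) :
    ∑' k, F R k ≤ ENNReal.ofReal ((1 + √3/R) ^ 4 * (4 * π / (R - √3))) := by
  have hR0 : (0:ℝ) < R := by linarith
  have hs3 : (0:ℝ) < √3 := Real.sqrt_pos.mpr (by norm_num)
  have ha : (0:ℝ) < R - √3 := by linarith [sqrt3_lt_two]
  have hC : (0:ℝ) < 1 + √3/R := by positivity
  have hmeas : Measurable (fun x : E3 => ENNReal.ofReal ((1 + √3/R) ^ 4 * g (R - √3) ‖x‖)) :=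
    ((measurable_g_norm (R - √3)).const_mul _).ennreal_ofReal
  have key : ∀ k, F R k ≤ ∫⁻ x in cube k, ENNReal.ofReal ((1 + √3/R) ^ 4 * g (R - √3) ‖x‖) := by
    intro k
    by_cases hk : R < nrm k
    · have hnrm0 : (0:ℝ) < nrm k := lt_trans hR0 hk
      have hcube : ∀ x ∈ cube k, (nrm k ^ 4)⁻¹ ≤ (1 + √3/R) ^ 4 * g (R - √3) ‖x‖ := by
        intro x hx
        have hxl : R - √3 < ‖x‖ := by linarith [nrm_le_of_mem_cube hx]
        have hx0 : (0:ℝ) < ‖x‖ := lt_of_lt_of_le ha hxl.le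
        rw [g, if_pos hxl]
        refine inv_pow4_le hnrm0 hx0 hC ?_
        calc ‖x‖ ≤ nrm k + √3 := norm_le_of_mem_cube hx
          _ ≤ (1 + √3/R) * nrm k := by
            rw [add_mul, one_mul]
            have : √3 ≤ √3/R * nrm k := by
              rw [div_mul_eq_mul_div, le_div_iff₀ hR0]
              nlinarith
            linarith
      calc F R k = ENNReal.ofReal ((nrm k ^ 4)⁻¹) * volume (cube k) := by
            rw [F, if_pos hk, volume_cube, mul_one]
        _ = ∫⁻ _x in cube k, ENNReal.ofReal ((nrm k ^ 4)⁻¹) := (setLIntegral_const _ _).symm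
        _ ≤ _ := setLIntegral_mono hmeas fun x hx => ENNReal.ofReal_le_ofReal (hcube x hx)
    · rw [F, if_neg hk, ENNReal.ofReal_zero]
      exact zero_le
  calc ∑' k, F R k ≤ ∑' k, ∫⁻ x in cube k, ENNReal.ofReal ((1 + √3/R) ^ 4 * g (R - √3) ‖x‖) :=
        ENNReal.tsum_le_tsum key
    _ = ∫⁻ x in ⋃ k, cube k, ENNReal.ofReal ((1 + √3/R) ^ 4 * g (R - √3) ‖x‖) :=
        (lintegral_iUnion measurableSet_cube cube_disjoint _).symm
    _ = ∫⁻ x, ENNReal.ofReal ((1 + √3/R) ^ 4 * g (R - √3) ‖x‖) := by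
        rw [iUnion_cube, Measure.restrict_univ]
    _ = ENNReal.ofReal (∫ x : E3, (1 + √3/R) ^ 4 * g (R - √3) ‖x‖) :=
        (ofReal_integral_eq_lintegral_ofReal ((integrable_g _ ha).const_mul _)
          (Filter.Eventually.of_forall fun x => mul_nonneg (by positivity) (g_nonneg _ _))).symm
    _ = _ := by rw [integral_const_mul, integral_g _ ha]

lemma le_tsum_F (R : ℝ) (hR : 2 ≤ R) :
    ENNReal.ofReal (((1 + √3/R) ^ 4)⁻¹ * (4 * π / (R + √3))) ≤ ∑' k, F R k := by
  have hR0 : (0:ℝ) < R := by linarith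
  have hs3 : (0:ℝ) < √3 := Real.sqrt_pos.mpr (by norm_num)
  have ha : (0:ℝ) < R + √3 := by positivity
  have hC : (0:ℝ) < 1 + √3/R := by positivity
  have key : ∀ k, (∫⁻ x in cube k,
      ENNReal.ofReal (((1 + √3/R) ^ 4)⁻¹ * g (R + √3) ‖x‖)) ≤ F R k := by
    intro k
    have hcube : ∀ x ∈ cube k, ((1 + √3/R) ^ 4)⁻¹ * g (R + √3) ‖x‖
        ≤ (if R < nrm k then (nrm k ^ 4)⁻¹ else 0) := by
      intro x hx
      by_cases hxg : R + √3 < ‖x‖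
      · have hx0 : (0:ℝ) < ‖x‖ := lt_trans ha hxg
        have hk : R < nrm k := by linarith [norm_le_of_mem_cube hx]
        have hnrm0 : (0:ℝ) < nrm k := lt_trans hR0 hk
        rw [g, if_pos hxg, if_pos hk]
        have h1 : (‖x‖ ^ 4)⁻¹ ≤ (1 + √3/R) ^ 4 * (nrm k ^ 4)⁻¹ := by
          refine inv_pow4_le hx0 hnrm0 hC ?_
          calc nrm k ≤ ‖x‖ + √3 := nrm_le_of_mem_cube hx
            _ ≤ (1 + √3/R) * ‖x‖ := by
              rw [add_mul, one_mul]
              have : √3 ≤ √3/R * ‖x‖ := by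
                rw [div_mul_eq_mul_div, le_div_iff₀ hR0]
                nlinarith
              linarith
        calc ((1 + √3/R) ^ 4)⁻¹ * (‖x‖ ^ 4)⁻¹
            ≤ ((1 + √3/R) ^ 4)⁻¹ * ((1 + √3/R) ^ 4 * (nrm k ^ 4)⁻¹) := by gcongr
          _ = (nrm k ^ 4)⁻¹ := by field_simp
      · rw [g, if_neg hxg, mul_zero]
        split <;> positivity
    calc (∫⁻ x in cube k, ENNReal.ofReal (((1 + √3/R) ^ 4)⁻¹ * g (R + √3) ‖x‖))
        ≤ ∫⁻ _x in cube k, ENNReal.ofReal (if R < nrm k then (nrm k ^ 4)⁻¹ else 0) :=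
          setLIntegral_mono measurable_const fun x hx => ENNReal.ofReal_le_ofReal (hcube x hx)
      _ = F R k := by rw [setLIntegral_const, volume_cube, mul_one, F]
  calc ENNReal.ofReal (((1 + √3/R) ^ 4)⁻¹ * (4 * π / (R + √3)))
      = ENNReal.ofReal (∫ x : E3, ((1 + √3/R) ^ 4)⁻¹ * g (R + √3) ‖x‖) := by
        rw [integral_const_mul, integral_g _ ha]
    _ = ∫⁻ x, ENNReal.ofReal (((1 + √3/R) ^ 4)⁻¹ * g (R + √3) ‖x‖) :=
        ofReal_integral_eq_lintegral_ofReal ((integrable_g _ ha).const_mul _)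
          (Filter.Eventually.of_forall fun x => mul_nonneg (by positivity) (g_nonneg _ _))
    _ = ∑' k, ∫⁻ x in cube k, ENNReal.ofReal (((1 + √3/R) ^ 4)⁻¹ * g (R + √3) ‖x‖) := by
        rw [← lintegral_iUnion measurableSet_cube cube_disjoint, iUnion_cube,
          Measure.restrict_univ]
    _ ≤ ∑' k, F R k := ENNReal.tsum_le_tsum key

def S (R : ℝ) : ℝ := ∑' k : Fin 3 → ℤ, if R < nrm k then (nrm k ^ 4)⁻¹ else 0

lemma S_eq (R : ℝ) : S R = (∑' k, F R k).toReal := by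
  unfold S F
  rw [ENNReal.tsum_toReal_eq (fun k => ENNReal.ofReal_ne_top)]
  congr 1
  funext k
  rw [ENNReal.toReal_ofReal (by split <;> positivity)]

lemma S_bounds (R : ℝ) (hR : 2 ≤ R) :
    ((1 + √3/R) ^ 4)⁻¹ * (4 * π / (R + √3)) ≤ S R ∧
      S R ≤ (1 + √3/R) ^ 4 * (4 * π / (R - √3)) := by
  have hub := tsum_F_le R hR
  have hlb := le_tsum_F R hR
  have hne : (∑' k, F R k) ≠ ⊤ :=
    ne_top_of_le_ne_top ENNReal.ofReal_ne_top hub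
  have hs3 : (0:ℝ) < √3 := Real.sqrt_pos.mpr (by norm_num)
  have hRs : (0:ℝ) < R - √3 := by linarith [sqrt3_lt_two]
  have hRp : (0:ℝ) < R + √3 := by linarith
  constructor
  · have := ENNReal.toReal_mono hne hlb
    rwa [ENNReal.toReal_ofReal
      (mul_nonneg (by positivity) (div_nonneg (by positivity) hRp.le)), ← S_eq] at this
  · have := ENNReal.toReal_mono ENNReal.ofReal_ne_top hub
    rw [← S_eq] at this
    exact le_trans this (ENNReal.toReal_ofReal
      (mul_nonneg (by positivity) (div_nonneg (by positivity) hRs.le))).le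

lemma tendsto_RS : Tendsto (fun R => R * S R) atTop (nhds (4 * π)) := by
  have hu : Tendsto (fun R : ℝ => √3/R) atTop (nhds 0) :=
    tendsto_const_nhds.div_atTop tendsto_id
  have h1 : Tendsto (fun R : ℝ => 1 + √3/R) atTop (nhds 1) := by
    simpa using tendsto_const_nhds.add hu
  have h1' : Tendsto (fun R : ℝ => 1 - √3/R) atTop (nhds 1) := by
    simpa using tendsto_const_nhds.sub hu
  have hlo : Tendsto (fun R : ℝ => ((1 + √3/R) ^ 4)⁻¹ * (4 * π) * (1 + √3/R)⁻¹)
      atTop (nhds (4 * π)) := by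
    have := (((h1.pow 4).inv₀ (by norm_num)).mul_const (4 * π)).mul (h1.inv₀ one_ne_zero)
    simpa using this
  have hhi : Tendsto (fun R : ℝ => (1 + √3/R) ^ 4 * (4 * π) * (1 - √3/R)⁻¹)
      atTop (nhds (4 * π)) := by
    have := ((h1.pow 4).mul_const (4 * π)).mul (h1'.inv₀ one_ne_zero)
    simpa using this
  have hs3 : (0:ℝ) < √3 := Real.sqrt_pos.mpr (by norm_num)
  refine tendsto_of_tendsto_of_tendsto_of_le_of_le' hlo hhi ?_ ?_
  · filter_upwards [eventually_ge_atTop (2:ℝ)] with R hR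
    have hR0 : (0:ℝ) < R := by linarith
    have h := (S_bounds R hR).1
    calc ((1 + √3/R) ^ 4)⁻¹ * (4 * π) * (1 + √3/R)⁻¹
        = R * (((1 + √3/R) ^ 4)⁻¹ * (4 * π / (R + √3))) := by
          have : (1 + √3/R)⁻¹ = R / (R + √3) := by
            rw [eq_div_iff (by positivity)]
            field_simp
          rw [this]; field_simp; try ring
      _ ≤ R * S R := by
          apply mul_le_mul_of_nonneg_left h hR0.le
  · filter_upwards [eventually_ge_atTop (2:ℝ)] with R hR
    have hR0 : (0:ℝ) < R := by linarith
    have hRs : (0:ℝ) < R - √3 := by linarith [sqrt3_lt_two]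
    have h := (S_bounds R hR).2
    calc R * S R ≤ R * ((1 + √3/R) ^ 4 * (4 * π / (R - √3))) := by
          apply mul_le_mul_of_nonneg_left h hR0.le
      _ = (1 + √3/R) ^ 4 * (4 * π) * (1 - √3/R)⁻¹ := by
          have : (1 - √3/R)⁻¹ = R / (R - √3) := by
            rw [eq_div_iff (by positivity)]
            field_simp
          rw [this]; field_simp; try ring

lemma latticeNorm_eq (k : Fin 3 → ℤ) : latticeNorm k = 2 * π * nrm k := by
  unfold latticeNorm nrm ι3
  congr 1
  rw [EuclideanSpace.norm_eq]
  simp [Real.norm_eq_abs, sq_abs]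

/-- Decay of the tail sums of `1/|k|⁴` over the momentum lattice `(2πℤ)³`:
`Λ · Σ_{|k| > Λ} 1/|k|⁴ → 1/(2π²)` as `Λ → ∞`. -/
theorem lattice_tail_sum_inv_pow_four_asymptotics :
    Tendsto
      (fun Λ : ℝ => Λ *
        ∑' k : Fin 3 → ℤ, if Λ < latticeNorm k then 1 / latticeNorm k ^ 4 else 0)
      atTop (nhds (1 / (2 * π ^ 2))) := by
  have h2pi : (0:ℝ) < 2 * π := by positivity
  have hcomp : Tendsto (fun Λ : ℝ => Λ / (2 * π)) atTop atTop :=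
    tendsto_id.atTop_div_const h2pi
  have hmain : Tendsto (fun Λ : ℝ => ((2 * π) ^ 3)⁻¹ * ((Λ / (2 * π)) * S (Λ / (2 * π))))
      atTop (nhds (((2 * π) ^ 3)⁻¹ * (4 * π))) :=
    (tendsto_RS.comp hcomp).const_mul _
  have heq : ((2 * π) ^ 3)⁻¹ * (4 * π) = 1 / (2 * π ^ 2) := by
    field_simp; ring
  rw [heq] at hmain
  refine hmain.congr' ?_
  filter_upwards [eventually_gt_atTop (0:ℝ)] with Λ hΛ
  have hterm : ∀ k : Fin 3 → ℤ,
      (if Λ < latticeNorm k then 1 / latticeNorm k ^ 4 else 0)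
        = ((2 * π) ^ 4)⁻¹ * (if Λ / (2 * π) < nrm k then (nrm k ^ 4)⁻¹ else 0) := by
    intro k
    rw [latticeNorm_eq]
    have hiff : Λ < 2 * π * nrm k ↔ Λ / (2 * π) < nrm k := by
      rw [div_lt_iff₀ h2pi]
      constructor <;> intro h <;> linarith [h]
    by_cases h : Λ / (2 * π) < nrm k
    · rw [if_pos (hiff.mpr h), if_pos h]
      have hn : (0:ℝ) < nrm k := lt_of_le_of_lt (by positivity) h
      rw [mul_pow, one_div, mul_inv]
    · rw [if_neg (fun hc => h (hiff.mp hc)), if_neg h, mul_zero]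
  calc ((2 * π) ^ 3)⁻¹ * ((Λ / (2 * π)) * S (Λ / (2 * π)))
      = Λ * (((2 * π) ^ 4)⁻¹ * S (Λ / (2 * π))) := by
        generalize S (Λ / (2 * π)) = s
        rw [show ((2*π):ℝ)^4 = (2*π)^3 * (2*π) from by ring, mul_inv, div_eq_mul_inv]
        ring
    _ = Λ * ∑' k : Fin 3 → ℤ, (if Λ < latticeNorm k then 1 / latticeNorm k ^ 4 else 0) := by
        congr 1
        rw [S, ← tsum_mul_left]
        congr 1
        funext k
        rw [hterm k]
end
end
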